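/- arXiv:1508.02841 — 8 statements merged into one kernel-verified Lean document; each statement's English description precedes it below -/
import Mathlib

section
/- Fix τ ≥ 0. Let (β₀⁽¹⁾, β₁⁽¹⁾) and (β₀⁽²⁾, β₁⁽²⁾) be two pairs of real parameters and let x₁, x₂ ∈ ℝ with x₁ ≠ x₂. If L₀(β₀⁽¹⁾ + β₁⁽¹⁾xᵢ, (β₁⁽¹⁾)²τ²) = L₀(β₀⁽²⁾ + β₁⁽²⁾xᵢ, (β₁⁽²⁾)²τ²) for i = 1, 2, then (β₀⁽¹⁾, β₁⁽¹⁾) = (β₀⁽²⁾, β₁⁽²⁾). (Identifiability of the functional Berkson logistic model with known error variance: if the two parameter vectors induce the same response distribution at all design points and the design points are not all equal, the parameters coincide.) -/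
open MeasureTheory ProbabilityTheory Real

/-- `L0 x v` is the smoothed logistic function: the expectation of the logistic
function `exp (x - ξ) / (1 + exp (x - ξ))` where `ξ ~ N(0, v)`. -/
noncomputable def L0 (x v : ℝ) : ℝ :=
  ∫ t, Real.exp (x - t) / (1 + Real.exp (x - t))
    ∂(gaussianReal 0 (Real.toNNReal v))

/-- `Lk k x v` is the `k`-th partial derivative of `L0` with respect to `x`. -/
noncomputable def Lk (k : ℕ) (x v : ℝ) : ℝ :=
  iteratedDeriv k (fun y => L0 y v) x

noncomputable def lgs (y : ℝ) : ℝ := Real.exp y / (1 + Real.exp y)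

lemma one_add_exp_pos (y : ℝ) : 0 < 1 + Real.exp y := by positivity

lemma lgs_strictMono : StrictMono lgs := by
  intro a b hab
  unfold lgs
  rw [div_lt_div_iff₀ (one_add_exp_pos a) (one_add_exp_pos b)]
  nlinarith [Real.exp_lt_exp.2 hab, Real.exp_pos a, Real.exp_pos b]

lemma lgs_nonneg (y : ℝ) : 0 ≤ lgs y :=
  div_nonneg (Real.exp_pos y).le (one_add_exp_pos y).le

lemma lgs_le_one (y : ℝ) : lgs y ≤ 1 := by
  unfold lgs
  rw [div_le_one (one_add_exp_pos y)]
  linarith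

lemma continuous_lgs : Continuous lgs :=
  Real.continuous_exp.div (continuous_const.add Real.continuous_exp)
    (fun y => (one_add_exp_pos y).ne')

lemma integrable_lgs_comp {μ : Measure ℝ} [IsProbabilityMeasure μ] (f : ℝ → ℝ)
    (hf : Continuous f) : Integrable (fun s => lgs (f s)) μ := by
  refine (integrable_const (1 : ℝ)).mono'
    ((continuous_lgs.comp hf).aestronglyMeasurable) (ae_of_all _ fun s => ?_)
  rw [Real.norm_eq_abs, abs_of_nonneg (lgs_nonneg _)]
  exact lgs_le_one _

lemma L0_zero_var (x : ℝ) : L0 x 0 = lgs x := by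
  unfold L0
  rw [Real.toNNReal_zero, gaussianReal_zero_var]
  rw [integral_dirac]
  simp [lgs]

lemma L0_repr (τ β₀ β₁ x : ℝ) :
    L0 (β₀ + β₁ * x) (β₁ ^ 2 * τ ^ 2)
      = ∫ s, lgs (β₀ + β₁ * (x - s)) ∂(gaussianReal 0 (Real.toNNReal (τ ^ 2))) := by
  have hv : Real.toNNReal (β₁ ^ 2 * τ ^ 2)
      = (.mk (β₁ ^ 2) (sq_nonneg _) * Real.toNNReal (τ ^ 2) : NNReal) := by
    ext
    push_cast [Real.coe_toNNReal _ (sq_nonneg τ),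
      Real.coe_toNNReal _ (mul_nonneg (sq_nonneg β₁) (sq_nonneg τ))]
    rfl
  have hmap := gaussianReal_map_const_mul (μ := 0) (v := Real.toNNReal (τ ^ 2)) β₁
  rw [mul_zero] at hmap
  unfold L0
  rw [hv, ← hmap]
  have hint : (∫ t, lgs (β₀ + β₁ * x - t)
        ∂Measure.map (fun s => β₁ * s) (gaussianReal 0 (Real.toNNReal (τ ^ 2))))
      = ∫ s, lgs (β₀ + β₁ * x - β₁ * s) ∂(gaussianReal 0 (Real.toNNReal (τ ^ 2))) :=
    integral_map (by fun_prop)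
      ((continuous_lgs.comp (continuous_const.sub continuous_id)).aestronglyMeasurable)
  rw [show (∫ t, rexp (β₀ + β₁ * x - t) / (1 + rexp (β₀ + β₁ * x - t))
        ∂Measure.map (fun s => β₁ * s) (gaussianReal 0 (Real.toNNReal (τ ^ 2))))
      = ∫ t, lgs (β₀ + β₁ * x - t)
        ∂Measure.map (fun s => β₁ * s) (gaussianReal 0 (Real.toNNReal (τ ^ 2))) from rfl]
  rw [hint]
  congr 1 with s
  congr 1
  ring

lemma toNNReal_sq_ne_zero (τ : ℝ) (hτ : 0 < τ) : Real.toNNReal (τ ^ 2) ≠ 0 := by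
  rw [ne_eq, Real.toNNReal_eq_zero, not_le]
  positivity

lemma gauss_repr (τ : ℝ) (hτ : 0 < τ) (b₀ b₁ x : ℝ) :
    ∫ s, lgs (b₀ + b₁ * (x - s)) ∂(gaussianReal 0 (Real.toNNReal (τ ^ 2)))
      = ∫ u, lgs (b₀ + b₁ * u) * gaussianPDFReal 0 (Real.toNNReal (τ ^ 2)) (x - u) := by
  rw [gaussianReal_of_var_ne_zero 0 (toNNReal_sq_ne_zero τ hτ)]
  rw [show gaussianPDF 0 (Real.toNNReal (τ ^ 2))
      = fun y => ((Real.toNNReal (gaussianPDFReal 0 (Real.toNNReal (τ ^ 2)) y) : NNReal)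
        : ENNReal) from rfl]
  rw [integral_withDensity_eq_integral_smul ((measurable_gaussianPDFReal _ _).real_toNNReal) _]
  rw [← integral_sub_left_eq_self
    (fun u => lgs (b₀ + b₁ * u) * gaussianPDFReal 0 (Real.toNNReal (τ ^ 2)) (x - u))
    (volume : Measure ℝ) x]
  congr 1 with s
  rw [NNReal.smul_def, Real.coe_toNNReal _ (gaussianPDFReal_nonneg _ _ _), smul_eq_mul,
    sub_sub_cancel, mul_comm]

lemma gpdf_eq (τ : ℝ) (hτ : 0 < τ) (y : ℝ) :
    gaussianPDFReal 0 (Real.toNNReal (τ ^ 2)) y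
      = (Real.sqrt (2 * π * τ ^ 2))⁻¹ * Real.exp (- y ^ 2 / (2 * τ ^ 2)) := by
  rw [gaussianPDFReal]
  rw [Real.coe_toNNReal _ (sq_nonneg τ), sub_zero]

lemma integrable_lgs_mul_gpdf (τ : ℝ) (b₀ b₁ x : ℝ) :
    Integrable (fun u => lgs (b₀ + b₁ * u) * gaussianPDFReal 0 (Real.toNNReal (τ ^ 2)) (x - u)) := by
  have hg : Integrable (fun u => gaussianPDFReal 0 (Real.toNNReal (τ ^ 2)) (x - u)) :=
    (integrable_comp_sub_left (μ := (volume : Measure ℝ))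
      (gaussianPDFReal 0 (Real.toNNReal (τ ^ 2))) x).2 (integrable_gaussianPDFReal _ _)
  refine hg.bdd_mul (c := 1) ((continuous_lgs.comp (by continuity)).aestronglyMeasurable) (ae_of_all _ fun u => ?_)
  rw [Real.norm_eq_abs, abs_of_nonneg (lgs_nonneg _)]
  exact lgs_le_one _

lemma lgs_integral_lt {μ : Measure ℝ} [IsProbabilityMeasure μ] (b x a₁ a₂ : ℝ)
    (h : a₁ < a₂) :
    ∫ s, lgs (a₁ + b * (x - s)) ∂μ < ∫ s, lgs (a₂ + b * (x - s)) ∂μ := by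
  have I1 : Integrable (fun s => lgs (a₁ + b * (x - s))) μ :=
    integrable_lgs_comp _ (by continuity)
  have I2 : Integrable (fun s => lgs (a₂ + b * (x - s))) μ :=
    integrable_lgs_comp _ (by continuity)
  have hint : ∀ s : ℝ, lgs (a₁ + b * (x - s)) < lgs (a₂ + b * (x - s)) :=
    fun s => lgs_strictMono (by linarith)
  have hpos : 0 < ∫ s, (lgs (a₂ + b * (x - s)) - lgs (a₁ + b * (x - s))) ∂μ := by
    refine (integral_pos_iff_support_of_nonneg_ae
      (ae_of_all _ fun s => sub_nonneg.2 (hint s).le) (I2.sub I1)).2 ?_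
    have hsupp : Function.support
        (fun s => lgs (a₂ + b * (x - s)) - lgs (a₁ + b * (x - s))) = Set.univ :=
      Set.eq_univ_of_forall fun s => (sub_pos.2 (hint s)).ne'
    rw [hsupp]
    simp
  rw [integral_sub I2 I1] at hpos
  linarith

lemma key_contradiction (τ : ℝ) (hτ : 0 < τ) (β₀₁ β₁₁ β₀₂ β₁₂ x₁ x₂ : ℝ)
    (hx : x₁ ≠ x₂) (hb : β₁₁ ≠ β₁₂)
    (h1 : ∫ u, lgs (β₀₁ + β₁₁ * u) * gaussianPDFReal 0 (Real.toNNReal (τ ^ 2)) (x₁ - u)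
        = ∫ u, lgs (β₀₂ + β₁₂ * u) * gaussianPDFReal 0 (Real.toNNReal (τ ^ 2)) (x₁ - u))
    (h2 : ∫ u, lgs (β₀₁ + β₁₁ * u) * gaussianPDFReal 0 (Real.toNNReal (τ ^ 2)) (x₂ - u)
        = ∫ u, lgs (β₀₂ + β₁₂ * u) * gaussianPDFReal 0 (Real.toNNReal (τ ^ 2)) (x₂ - u)) :
    False := by
  set g : ℝ → ℝ := gaussianPDFReal 0 (Real.toNNReal (τ ^ 2)) with hgdef
  have hv : (0:ℝ) < τ ^ 2 := by positivity
  set ε := β₁₁ - β₁₂ with hεdef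
  have hε0 : ε ≠ 0 := sub_ne_zero.2 hb
  set d := x₂ - x₁ with hddef
  have hd0 : d ≠ 0 := sub_ne_zero.2 (Ne.symm hx)
  set u0 := (β₀₂ - β₀₁) / ε with hu0def
  have hline : ∀ u : ℝ, (β₀₁ + β₁₁ * u) - (β₀₂ + β₁₂ * u) = ε * (u - u0) := by
    intro u
    rw [hu0def]
    field_simp
    ring
  set A : ℝ → ℝ := fun u => ((x₁ - u) ^ 2 - (x₂ - u) ^ 2) / (2 * τ ^ 2) with hAdef
  set K := Real.exp (A u0) with hKdef
  set c := (Real.sqrt (2 * π * τ ^ 2))⁻¹ with hcdef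
  have hc : 0 < c := by
    rw [hcdef]
    have : (0:ℝ) < Real.sqrt (2 * π * τ ^ 2) := Real.sqrt_pos.2 (by positivity)
    positivity
  have hgd : ∀ u : ℝ, g (x₂ - u) - K * g (x₁ - u)
      = c * Real.exp (-(x₁ - u) ^ 2 / (2 * τ ^ 2)) * (Real.exp (A u) - Real.exp (A u0)) := by
    intro u
    rw [hgdef, gpdf_eq τ hτ, gpdf_eq τ hτ]
    have : Real.exp (-(x₂ - u) ^ 2 / (2 * τ ^ 2))
        = Real.exp (-(x₁ - u) ^ 2 / (2 * τ ^ 2)) * Real.exp (A u) := by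
      rw [← Real.exp_add]
      congr 1
      rw [hAdef]
      field_simp
      ring
    rw [this, hKdef, hcdef]
    ring
  have hA : ∀ u : ℝ, A u - A u0 = d * (u - u0) / τ ^ 2 := by
    intro u
    rw [hAdef, hddef]
    field_simp
    ring
  set h : ℝ → ℝ := fun u => lgs (β₀₁ + β₁₁ * u) - lgs (β₀₂ + β₁₂ * u) with hhdef
  set W : ℝ → ℝ := fun u => h u * (g (x₂ - u) - K * g (x₁ - u)) with hWdef
  have hWeq : W = fun u =>
      (lgs (β₀₁ + β₁₁ * u) * g (x₂ - u) - lgs (β₀₂ + β₁₂ * u) * g (x₂ - u))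
      - K * (lgs (β₀₁ + β₁₁ * u) * g (x₁ - u) - lgs (β₀₂ + β₁₂ * u) * g (x₁ - u)) := by
    funext u
    rw [hWdef, hhdef]
    ring
  have I11 := integrable_lgs_mul_gpdf τ β₀₁ β₁₁ x₁
  have I21 := integrable_lgs_mul_gpdf τ β₀₂ β₁₂ x₁
  have I12 := integrable_lgs_mul_gpdf τ β₀₁ β₁₁ x₂
  have I22 := integrable_lgs_mul_gpdf τ β₀₂ β₁₂ x₂
  have hWint : Integrable W := by
    rw [hWeq]
    exact (I12.sub I22).sub ((I11.sub I21).const_mul K)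
  have hW0 : ∫ u, W u = 0 := by
    calc ∫ u, W u
        = ∫ u, ((lgs (β₀₁ + β₁₁ * u) * g (x₂ - u) - lgs (β₀₂ + β₁₂ * u) * g (x₂ - u))
          - K * (lgs (β₀₁ + β₁₁ * u) * g (x₁ - u) - lgs (β₀₂ + β₁₂ * u) * g (x₁ - u))) := by
          simp only [hWeq]
      _ = ((∫ u, lgs (β₀₁ + β₁₁ * u) * g (x₂ - u)) - ∫ u, lgs (β₀₂ + β₁₂ * u) * g (x₂ - u))
          - K * ((∫ u, lgs (β₀₁ + β₁₁ * u) * g (x₁ - u))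
            - ∫ u, lgs (β₀₂ + β₁₂ * u) * g (x₁ - u)) := by
          have Ia : Integrable (fun u => lgs (β₀₁ + β₁₁ * u) * g (x₂ - u)
              - lgs (β₀₂ + β₁₂ * u) * g (x₂ - u)) := I12.sub I22
          have Ib : Integrable (fun u => lgs (β₀₁ + β₁₁ * u) * g (x₁ - u)
              - lgs (β₀₂ + β₁₂ * u) * g (x₁ - u)) := I11.sub I21
          have Ic : Integrable (fun u => K * (lgs (β₀₁ + β₁₁ * u) * g (x₁ - u)
              - lgs (β₀₂ + β₁₂ * u) * g (x₁ - u))) := Ib.const_mul K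
          rw [integral_sub Ia Ic, integral_sub I12 I22, integral_const_mul,
            integral_sub I11 I21]
      _ = 0 := by rw [h1, h2]; ring
  -- sign analysis
  have claim1 : ∀ u : ℝ, u0 < u → 0 < ε * h u := by
    intro u hu
    have hlu := hline u
    rcases lt_or_gt_of_ne hε0 with hεneg | hεpos
    · have : β₀₁ + β₁₁ * u < β₀₂ + β₁₂ * u := by nlinarith
      have hh : h u < 0 := sub_neg.2 (lgs_strictMono this)
      exact mul_pos_of_neg_of_neg hεneg hh
    · have : β₀₂ + β₁₂ * u < β₀₁ + β₁₁ * u := by nlinarith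
      have hh : 0 < h u := sub_pos.2 (lgs_strictMono this)
      exact mul_pos hεpos hh
  have claim2 : ∀ u : ℝ, u < u0 → ε * h u < 0 := by
    intro u hu
    have hlu := hline u
    rcases lt_or_gt_of_ne hε0 with hεneg | hεpos
    · have : β₀₂ + β₁₂ * u < β₀₁ + β₁₁ * u := by nlinarith
      have hh : 0 < h u := sub_pos.2 (lgs_strictMono this)
      exact mul_neg_of_neg_of_pos hεneg hh
    · have : β₀₁ + β₁₁ * u < β₀₂ + β₁₂ * u := by nlinarith
      have hh : h u < 0 := sub_neg.2 (lgs_strictMono this)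
      exact mul_neg_of_pos_of_neg hεpos hh
  have claimg1 : ∀ u : ℝ, u0 < u → 0 < d * (g (x₂ - u) - K * g (x₁ - u)) := by
    intro u hu
    rw [hgd u]
    have hAu := hA u
    rcases lt_or_gt_of_ne hd0 with hdneg | hdpos
    · have hAlt : A u < A u0 := by
        have := div_neg_of_neg_of_pos (mul_neg_of_neg_of_pos hdneg (sub_pos.2 hu)) hv
        linarith
      have : Real.exp (A u) - Real.exp (A u0) < 0 := sub_neg.2 (Real.exp_lt_exp.2 hAlt)
      have hcc : 0 < c * Real.exp (-(x₁ - u) ^ 2 / (2 * τ ^ 2)) :=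
        mul_pos hc (Real.exp_pos _)
      exact mul_pos_of_neg_of_neg hdneg (mul_neg_of_pos_of_neg hcc this)
    · have hAlt : A u0 < A u := by
        have := div_pos (mul_pos hdpos (sub_pos.2 hu)) hv
        linarith
      have : 0 < Real.exp (A u) - Real.exp (A u0) := sub_pos.2 (Real.exp_lt_exp.2 hAlt)
      have hcc : 0 < c * Real.exp (-(x₁ - u) ^ 2 / (2 * τ ^ 2)) :=
        mul_pos hc (Real.exp_pos _)
      exact mul_pos hdpos (mul_pos hcc this)
  have claimg2 : ∀ u : ℝ, u < u0 → d * (g (x₂ - u) - K * g (x₁ - u)) < 0 := by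
    intro u hu
    rw [hgd u]
    have hAu := hA u
    rcases lt_or_gt_of_ne hd0 with hdneg | hdpos
    · have hAlt : A u0 < A u := by
        have := div_pos (mul_pos_of_neg_of_neg hdneg (sub_neg.2 hu)) hv
        linarith
      have : 0 < Real.exp (A u) - Real.exp (A u0) := sub_pos.2 (Real.exp_lt_exp.2 hAlt)
      have hcc : 0 < c * Real.exp (-(x₁ - u) ^ 2 / (2 * τ ^ 2)) :=
        mul_pos hc (Real.exp_pos _)
      exact mul_neg_of_neg_of_pos hdneg (mul_pos hcc this)
    · have hAlt : A u < A u0 := by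
        have := div_neg_of_neg_of_pos (mul_neg_of_pos_of_neg hdpos (sub_neg.2 hu)) hv
        linarith
      have : Real.exp (A u) - Real.exp (A u0) < 0 := sub_neg.2 (Real.exp_lt_exp.2 hAlt)
      have hcc : 0 < c * Real.exp (-(x₁ - u) ^ 2 / (2 * τ ^ 2)) :=
        mul_pos hc (Real.exp_pos _)
      exact mul_neg_of_pos_of_neg hdpos (mul_neg_of_pos_of_neg hcc this)
  have hsign : ∀ u : ℝ, u ≠ u0 → 0 < (ε * d) * W u := by
    intro u hu
    have hrw : (ε * d) * W u = (ε * h u) * (d * (g (x₂ - u) - K * g (x₁ - u))) := by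
      rw [hWdef]; ring
    rw [hrw]
    rcases lt_or_gt_of_ne hu with hlt | hgt
    · exact mul_pos_of_neg_of_neg (claim2 u hlt) (claimg2 u hlt)
    · exact mul_pos (claim1 u hgt) (claimg1 u hgt)
  have hWnonneg : ∀ u : ℝ, 0 ≤ (ε * d) * W u := by
    intro u
    by_cases hu : u = u0
    · have hl : β₀₁ + β₁₁ * u0 = β₀₂ + β₁₂ * u0 := by
        have hl0 := hline u0
        rw [sub_self, mul_zero, sub_eq_zero] at hl0
        exact hl0
      have hzero : h u = 0 := by
        show lgs (β₀₁ + β₁₁ * u) - lgs (β₀₂ + β₁₂ * u) = 0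
        rw [hu, hl, sub_self]
      have : W u = 0 := by
        show h u * (g (x₂ - u) - K * g (x₁ - u)) = 0
        rw [hzero, zero_mul]
      rw [this, mul_zero]
    · exact (hsign u hu).le
  have hpos : 0 < ∫ u, (ε * d) * W u := by
    refine (integral_pos_iff_support_of_nonneg_ae (ae_of_all _ hWnonneg)
      (hWint.const_mul _)).2 ?_
    have hsub : Set.Ioi u0 ⊆ Function.support (fun u => (ε * d) * W u) :=
      fun u hu => (hsign u (ne_of_gt hu)).ne'
    calc (0 : ENNReal) < volume (Set.Ioi u0) := by rw [Real.volume_Ioi]; exact ENNReal.zero_lt_top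
    _ ≤ volume (Function.support (fun u => (ε * d) * W u)) := measure_mono hsub
  rw [integral_const_mul, hW0, mul_zero] at hpos
  exact lt_irrefl 0 hpos

/-- Identifiability of the functional Berkson logistic model with known
error variance: two distinct design points suffice. -/
theorem stmt_0 (τ : ℝ) (hτ : 0 ≤ τ)
    (β₀₁ β₁₁ β₀₂ β₁₂ x₁ x₂ : ℝ) (hx : x₁ ≠ x₂)
    (h1 : L0 (β₀₁ + β₁₁ * x₁) (β₁₁ ^ 2 * τ ^ 2)
        = L0 (β₀₂ + β₁₂ * x₁) (β₁₂ ^ 2 * τ ^ 2))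
    (h2 : L0 (β₀₁ + β₁₁ * x₂) (β₁₁ ^ 2 * τ ^ 2)
        = L0 (β₀₂ + β₁₂ * x₂) (β₁₂ ^ 2 * τ ^ 2)) :
    β₀₁ = β₀₂ ∧ β₁₁ = β₁₂ := by
  rcases eq_or_lt_of_le hτ with hτ0 | hτpos
  · have hz1 : β₁₁ ^ 2 * τ ^ 2 = 0 := by rw [← hτ0]; ring
    have hz2 : β₁₂ ^ 2 * τ ^ 2 = 0 := by rw [← hτ0]; ring
    rw [hz1, hz2, L0_zero_var, L0_zero_var] at h1 h2
    have e1 := lgs_strictMono.injective h1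
    have e2 := lgs_strictMono.injective h2
    have h3 : (β₁₁ - β₁₂) * (x₁ - x₂) = 0 := by linear_combination e1 - e2
    have hb : β₁₁ = β₁₂ := by
      rcases mul_eq_zero.1 h3 with h4 | h4
      · exact sub_eq_zero.1 h4
      · exact absurd (sub_eq_zero.1 h4) hx
    refine ⟨?_, hb⟩
    linear_combination e1 - x₁ * hb
  · rw [L0_repr τ β₀₁ β₁₁ x₁, L0_repr τ β₀₂ β₁₂ x₁] at h1
    rw [L0_repr τ β₀₁ β₁₁ x₂, L0_repr τ β₀₂ β₁₂ x₂] at h2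
    by_cases hb : β₁₁ = β₁₂
    · subst hb
      refine ⟨?_, rfl⟩
      rcases lt_trichotomy β₀₁ β₀₂ with hlt | heq | hgt
      · exact absurd h1 (ne_of_lt (lgs_integral_lt _ _ _ _ hlt))
      · exact heq
      · exact absurd h1.symm (ne_of_lt (lgs_integral_lt _ _ _ _ hgt))
    · exfalso
      rw [gauss_repr τ hτpos, gauss_repr τ hτpos] at h1 h2
      exact key_contradiction τ hτpos β₀₁ β₁₁ β₀₂ β₁₂ x₁ x₂ hx hb h1 h2
end

section
/- Fix τ ≥ 0. Let X be a real random variable on a probability space whose distribution is not degenerate (i.e., X is not almost surely equal to a single constant). If (β₀⁽¹⁾, β₁⁽¹⁾) and (β₀⁽²⁾, β₁⁽²⁾) are real parameter pairs such that L₀(β₀⁽¹⁾ + β₁⁽¹⁾X, (β₁⁽¹⁾)²τ²) = L₀(β₀⁽²⁾ + β₁⁽²⁾X, (β₁⁽²⁾)²τ²) almost surely, then (β₀⁽¹⁾, β₁⁽¹⁾) = (β₀⁽²⁾, β₁⁽²⁾). (Identifiability of the structural Berkson logistic model with known error variance.) -/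
open MeasureTheory ProbabilityTheory Real
open scoped NNReal ENNReal

namespace BerksonAux

/-- The logistic function. -/
noncomputable def lg (x : ℝ) : ℝ := Real.exp x / (1 + Real.exp x)

lemma one_add_exp_pos (x : ℝ) : (0:ℝ) < 1 + Real.exp x := by positivity

lemma lg_pos (x : ℝ) : 0 < lg x := by
  unfold lg; positivity

lemma lg_lt_one (x : ℝ) : lg x < 1 := by
  unfold lg
  rw [div_lt_one (one_add_exp_pos x)]
  linarith

lemma lg_strictMono : StrictMono lg := by
  intro x y hxy
  unfold lg
  rw [div_lt_div_iff₀ (one_add_exp_pos x) (one_add_exp_pos y)]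
  have h := Real.exp_lt_exp.mpr hxy
  nlinarith [Real.exp_pos x, Real.exp_pos y]

lemma lg_lt_lg_iff {x y : ℝ} : lg x < lg y ↔ x < y := lg_strictMono.lt_iff_lt

lemma lg_inj {x y : ℝ} (h : lg x = lg y) : x = y := lg_strictMono.injective h

lemma lg_abs_le_one (x : ℝ) : |lg x| ≤ 1 := by
  rw [abs_le]
  constructor
  · linarith [lg_pos x]
  · linarith [lg_lt_one x]

lemma continuous_lg : Continuous lg := by
  unfold lg
  exact Real.continuous_exp.div (by continuity) (fun x => (one_add_exp_pos x).ne')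

lemma L0_eq_integral (x v : ℝ) :
    L0 x v = ∫ t, lg (x - t) ∂(gaussianReal 0 (Real.toNNReal v)) := rfl

lemma integrable_lg_shift (x : ℝ) (μ : Measure ℝ) [IsProbabilityMeasure μ] :
    Integrable (fun t => lg (x - t)) μ := by
  refine Integrable.mono' (integrable_const 1) ?_ ?_
  · exact (continuous_lg.comp (continuous_const.sub continuous_id)).aestronglyMeasurable
  · exact Filter.Eventually.of_forall fun t => lg_abs_le_one _

lemma L0_strictMono (v : ℝ) : StrictMono (fun x => L0 x v) := by
  intro x y hxy
  simp only [L0_eq_integral]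
  rw [← sub_pos, ← integral_sub (integrable_lg_shift y _) (integrable_lg_shift x _)]
  rw [integral_pos_iff_support_of_nonneg_ae]
  · have hs : Function.support (fun t => lg (y - t) - lg (x - t)) = Set.univ := by
      ext t
      simp only [Function.mem_support, Set.mem_univ, iff_true]
      have : lg (x - t) < lg (y - t) := lg_strictMono (by linarith)
      linarith
    rw [hs]
    simp
  · exact Filter.Eventually.of_forall fun t => by
      have : lg (x - t) < lg (y - t) := lg_strictMono (by linarith)
      simp only [Pi.zero_apply]
      linarith
  · exact (integrable_lg_shift y _).sub (integrable_lg_shift x _)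

lemma L0_lt_L0_iff {v x y : ℝ} : L0 x v < L0 y v ↔ x < y := (L0_strictMono v).lt_iff_lt

lemma L0_inj {v x y : ℝ} (h : L0 x v = L0 y v) : x = y := (L0_strictMono v).injective h

lemma L0_zero (x : ℝ) : L0 x 0 = lg x := by
  rw [L0_eq_integral, Real.toNNReal_zero, gaussianReal_zero_var, integral_dirac]
  simp

/-- Integrability of a gaussian with a linear term in the exponent. -/
lemma integrable_expquad {τ : ℝ} (hτ : 0 < τ) (s d : ℝ) :
    Integrable (fun u : ℝ => Real.exp (s*u + d - u^2/(2*τ^2))) := by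
  have key : ∀ u : ℝ, s*u + d - u^2/(2*τ^2)
      = -(1/(2*τ^2)) * (u - s*τ^2)^2 + (d + s^2*τ^2/2) := by
    intro u
    field_simp
    ring
  have h1 : Integrable (fun u : ℝ => Real.exp (-(1/(2*τ^2)) * u^2)) :=
    integrable_exp_neg_mul_sq (by positivity)
  have h2 : Integrable (fun u : ℝ => Real.exp (-(1/(2*τ^2)) * (u - s*τ^2)^2)) :=
    h1.comp_sub_right (s*τ^2)
  have h3 := h2.const_mul (Real.exp (d + s^2*τ^2/2))
  refine h3.congr ?_
  refine Filter.Eventually.of_forall fun u => ?_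
  change Real.exp (d + s^2*τ^2/2) * Real.exp (-(1/(2*τ^2)) * (u - s*τ^2)^2)
      = Real.exp (s*u + d - u^2/(2*τ^2))
  rw [← Real.exp_add, key u]
  ring_nf

/-- Integrability of a bounded function times a gaussian kernel with linear exponent. -/
lemma integrable_mul_expquad {τ : ℝ} (hτ : 0 < τ) {f : ℝ → ℝ} (hf : Continuous f)
    {C : ℝ} (hC : ∀ u, |f u| ≤ C) (s d : ℝ) :
    Integrable (fun u : ℝ => f u * Real.exp (s*u + d) * Real.exp (-u^2/(2*τ^2))) := by
  refine Integrable.mono' ((integrable_expquad hτ s d).const_mul C) ?_ ?_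
  · exact ((hf.mul ((Real.continuous_exp.comp (by continuity)))).mul
      ((Real.continuous_exp.comp (by continuity)))).aestronglyMeasurable
  · refine Filter.Eventually.of_forall fun u => ?_
    have he1 : (0:ℝ) < Real.exp (s*u + d) := Real.exp_pos _
    have he2 : (0:ℝ) < Real.exp (-u^2/(2*τ^2)) := Real.exp_pos _
    have hnorm : ‖f u * Real.exp (s*u + d) * Real.exp (-u^2/(2*τ^2))‖
        = |f u| * (Real.exp (s*u + d) * Real.exp (-u^2/(2*τ^2))) := by
      rw [Real.norm_eq_abs, abs_mul, abs_mul, abs_of_pos he1, abs_of_pos he2, mul_assoc]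
    rw [hnorm, ← Real.exp_add]
    have h4 : s*u + d + -u^2/(2*τ^2) = s*u + d - u^2/(2*τ^2) := by ring
    rw [h4]
    have hfC : |f u| ≤ C := hC u
    have he3 : (0:ℝ) < Real.exp (s*u + d - u^2/(2*τ^2)) := Real.exp_pos _
    nlinarith [abs_nonneg (f u)]

/-- The key representation: for `b > 0`, `τ > 0`,
`L0 (a + b x) (b² τ²)` is a convolution of the logistic curve `u ↦ lg (a + b u)`
with a gaussian kernel of variance `τ²` in `x`. -/
lemma L0_repr {τ b : ℝ} (hτ : 0 < τ) (hb : 0 < b) (a x : ℝ) :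
    L0 (a + b*x) (b^2*τ^2)
      = ∫ u, lg (a + b*u) *
          ((Real.sqrt (2*π*τ^2))⁻¹ * Real.exp (-(x-u)^2/(2*τ^2))) := by
  have hv : (0:ℝ) < b^2*τ^2 := by positivity
  have hv' : (b^2*τ^2).toNNReal ≠ 0 := by
    simp only [ne_eq, Real.toNNReal_eq_zero, not_le]
    exact hv
  rw [L0_eq_integral, gaussianReal_of_var_ne_zero _ hv']
  have hpdf : (gaussianPDF 0 (b^2*τ^2).toNNReal)
      = fun t => ((Real.toNNReal (gaussianPDFReal 0 (b^2*τ^2).toNNReal t) : ℝ≥0) : ℝ≥0∞) := by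
    funext t
    rfl
  rw [hpdf, integral_withDensity_eq_integral_smul
    ((measurable_gaussianPDFReal _ _).real_toNNReal) (fun t => lg ((a + b*x) - t))]
  have hsm : ∀ t : ℝ, (Real.toNNReal (gaussianPDFReal 0 (b^2*τ^2).toNNReal t) : ℝ≥0)
      • lg ((a + b*x) - t) = gaussianPDFReal 0 (b^2*τ^2).toNNReal t * lg ((a + b*x) - t) := by
    intro t
    rw [NNReal.smul_def, smul_eq_mul, Real.coe_toNNReal _ (gaussianPDFReal_nonneg _ _ _)]
  simp only [hsm]
  -- change of variables t = b * s
  have hcv := MeasureTheory.Measure.integral_comp_mul_left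
    (fun t => gaussianPDFReal 0 (b^2*τ^2).toNNReal t * lg ((a + b*x) - t)) b
  rw [smul_eq_mul, abs_of_pos (inv_pos.mpr hb)] at hcv
  have h5 : (∫ t, gaussianPDFReal 0 (b^2*τ^2).toNNReal t * lg ((a + b*x) - t))
      = b * ∫ s, gaussianPDFReal 0 (b^2*τ^2).toNNReal (b*s) * lg ((a + b*x) - b*s) := by
    rw [hcv]
    field_simp
  rw [h5, ← MeasureTheory.integral_const_mul]
  have hgauss : ∀ s : ℝ, b * (gaussianPDFReal 0 (b^2*τ^2).toNNReal (b*s) * lg ((a + b*x) - b*s))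
      = lg ((a + b*x) - b*s) * ((Real.sqrt (2*π*τ^2))⁻¹ * Real.exp (-s^2/(2*τ^2))) := by
    intro s
    unfold gaussianPDFReal
    have hcoe : ((b^2*τ^2).toNNReal : ℝ) = b^2*τ^2 := Real.coe_toNNReal _ hv.le
    rw [hcoe]
    have hsq : Real.sqrt (2*π*(b^2*τ^2)) = b * Real.sqrt (2*π*τ^2) := by
      have h6 : 2*π*(b^2*τ^2) = b^2 * (2*π*τ^2) := by ring
      rw [h6, Real.sqrt_mul (sq_nonneg b), Real.sqrt_sq hb.le]
    have hexp : -(b*s - 0)^2/(2*(b^2*τ^2)) = -s^2/(2*τ^2) := by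
      field_simp
      ring
    rw [hexp, hsq, mul_inv]
    have hs2 : (0:ℝ) < Real.sqrt (2*π*τ^2) := Real.sqrt_pos.mpr (by positivity)
    field_simp
  simp only [hgauss]
  -- change of variables s = x - u
  rw [← MeasureTheory.integral_sub_left_eq_self
    (fun s => lg ((a + b*x) - b*s) * ((Real.sqrt (2*π*τ^2))⁻¹ * Real.exp (-s^2/(2*τ^2))))
    volume x]
  congr 1
  funext u
  have h7 : (a + b*x) - b*(x - u) = a + b*u := by ring
  have h8 : -(x - u)^2/(2*τ^2) = -(x-u)^2/(2*τ^2) := rfl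
  rw [h7]

lemma integrable_mul_exp_lin {τ : ℝ} (hτ : 0 < τ) {f : ℝ → ℝ} (hf : Continuous f)
    {C : ℝ} (hC : ∀ u, |f u| ≤ C) (s : ℝ) :
    Integrable (fun u : ℝ => f u * Real.exp (s*u) * Real.exp (-u^2/(2*τ^2))) := by
  have h := integrable_mul_expquad hτ hf hC s 0
  refine h.congr (Filter.Eventually.of_forall fun u => ?_)
  simp only
  rw [add_zero]

lemma continuous_lg_affine (a b : ℝ) : Continuous (fun u : ℝ => lg (a + b*u)) :=
  continuous_lg.comp (by continuity)

/-- From equality of the two smoothed logistic curves at a point `x`, the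
"Laplace-type" integral of the difference vanishes at `s = x/τ²`. -/
lemma psi_zero {τ b₁ b₂ : ℝ} (hτ : 0 < τ) (hb₁ : 0 < b₁) (hb₂ : 0 < b₂) (a₁ a₂ x : ℝ)
    (h : L0 (a₁ + b₁*x) (b₁^2*τ^2) = L0 (a₂ + b₂*x) (b₂^2*τ^2)) :
    ∫ u, (lg (a₁ + b₁*u) - lg (a₂ + b₂*u)) * Real.exp ((x/τ^2)*u)
      * Real.exp (-u^2/(2*τ^2)) = 0 := by
  have hsqrt : (0:ℝ) < Real.sqrt (2*π*τ^2) := Real.sqrt_pos.mpr (by positivity)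
  have hc : 0 < (Real.sqrt (2*π*τ^2))⁻¹ := inv_pos.mpr hsqrt
  rw [L0_repr hτ hb₁ a₁ x, L0_repr hτ hb₂ a₂ x] at h
  have hexp : ∀ u : ℝ, (Real.sqrt (2*π*τ^2))⁻¹ * Real.exp (-(x-u)^2/(2*τ^2))
      = ((Real.sqrt (2*π*τ^2))⁻¹ * Real.exp (-x^2/(2*τ^2)))
        * (Real.exp ((x/τ^2)*u) * Real.exp (-u^2/(2*τ^2))) := by
    intro u
    have harg : -(x-u)^2/(2*τ^2) = -x^2/(2*τ^2) + ((x/τ^2)*u + -u^2/(2*τ^2)) := by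
      field_simp
      ring
    rw [harg, Real.exp_add, Real.exp_add]
    ring
  have hrw : ∀ a b : ℝ, (∫ u, lg (a + b*u) * ((Real.sqrt (2*π*τ^2))⁻¹ * Real.exp (-(x-u)^2/(2*τ^2))))
      = ((Real.sqrt (2*π*τ^2))⁻¹ * Real.exp (-x^2/(2*τ^2)))
        * ∫ u, lg (a + b*u) * Real.exp ((x/τ^2)*u) * Real.exp (-u^2/(2*τ^2)) := by
    intro a b
    rw [← MeasureTheory.integral_const_mul]
    congr 1
    funext u
    rw [hexp u]
    ring
  rw [hrw a₁ b₁, hrw a₂ b₂] at h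
  have hC : (Real.sqrt (2*π*τ^2))⁻¹ * Real.exp (-x^2/(2*τ^2)) ≠ 0 :=
    ne_of_gt (mul_pos hc (Real.exp_pos _))
  have hψ := mul_left_cancel₀ hC h
  have hfe : (fun u => (lg (a₁ + b₁*u) - lg (a₂ + b₂*u)) * Real.exp ((x/τ^2)*u)
        * Real.exp (-u^2/(2*τ^2)))
      = fun u => lg (a₁ + b₁*u) * Real.exp ((x/τ^2)*u) * Real.exp (-u^2/(2*τ^2))
        - lg (a₂ + b₂*u) * Real.exp ((x/τ^2)*u) * Real.exp (-u^2/(2*τ^2)) := by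
    funext u
    ring
  rw [hfe, integral_sub
      (integrable_mul_exp_lin hτ (continuous_lg_affine a₁ b₁) (fun u => lg_abs_le_one _) _)
      (integrable_mul_exp_lin hτ (continuous_lg_affine a₂ b₂) (fun u => lg_abs_le_one _) _),
    hψ, sub_self]

/-- Single-crossing plus strict monotonicity of the tilted integral:
the difference integral cannot vanish at two distinct tilts. -/
lemma two_zero_contra {τ a₁ b₁ a₂ b₂ s₁ s₂ : ℝ} (hτ : 0 < τ) (hb : b₂ < b₁) (hs : s₁ < s₂)
    (h1 : ∫ u, (lg (a₁ + b₁*u) - lg (a₂ + b₂*u)) * Real.exp (s₁*u)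
        * Real.exp (-u^2/(2*τ^2)) = 0)
    (h2 : ∫ u, (lg (a₁ + b₁*u) - lg (a₂ + b₂*u)) * Real.exp (s₂*u)
        * Real.exp (-u^2/(2*τ^2)) = 0) : False := by
  set g : ℝ → ℝ := fun u => lg (a₁ + b₁*u) - lg (a₂ + b₂*u) with hg_def
  have hgc : Continuous g := (continuous_lg_affine a₁ b₁).sub (continuous_lg_affine a₂ b₂)
  have hgb : ∀ u, |g u| ≤ 2 := by
    intro u
    have ha1 := lg_abs_le_one (a₁ + b₁*u)
    have ha2 := lg_abs_le_one (a₂ + b₂*u)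
    rw [abs_le] at ha1 ha2 ⊢
    simp only [hg_def]
    constructor <;> [linarith; linarith]
  set u₀ : ℝ := (a₂ - a₁)/(b₁ - b₂) with hu₀_def
  have hbne : b₁ - b₂ ≠ 0 := sub_ne_zero.mpr hb.ne'
  have hdiff : ∀ u, (a₁ + b₁*u) - (a₂ + b₂*u) = (b₁ - b₂)*(u - u₀) := by
    intro u
    have hm : (b₁ - b₂) * u₀ = a₂ - a₁ := by rw [hu₀_def]; exact mul_div_cancel₀ _ hbne
    linear_combination hm
  have hgpos : ∀ u, u₀ < u → 0 < g u := by
    intro u hu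
    have h3 : a₂ + b₂*u < a₁ + b₁*u := by nlinarith [hdiff u]
    have := lg_lt_lg_iff.mpr h3
    simp only [hg_def]
    linarith
  have hgneg : ∀ u, u < u₀ → g u < 0 := by
    intro u hu
    have h3 : a₁ + b₁*u < a₂ + b₂*u := by nlinarith [hdiff u]
    have := lg_lt_lg_iff.mpr h3
    simp only [hg_def]
    linarith
  have hg0 : g u₀ = 0 := by
    have h3 : a₁ + b₁*u₀ = a₂ + b₂*u₀ := by
      have := hdiff u₀
      simp at this
      linarith
    simp only [hg_def, h3, sub_self]
  -- translate the zeros to the tilted functional centered at u₀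
  have key : ∀ s : ℝ, (∫ u, g u * Real.exp (s*u) * Real.exp (-u^2/(2*τ^2)) = 0) →
      ∫ u, g u * Real.exp (s*(u - u₀)) * Real.exp (-u^2/(2*τ^2)) = 0 := by
    intro s hzero
    have hfe : (fun u => g u * Real.exp (s*(u - u₀)) * Real.exp (-u^2/(2*τ^2)))
        = fun u => Real.exp (-(s*u₀)) * (g u * Real.exp (s*u) * Real.exp (-u^2/(2*τ^2))) := by
      funext u
      rw [show s*(u - u₀) = s*u + -(s*u₀) from by ring, Real.exp_add]
      ring
    rw [hfe, MeasureTheory.integral_const_mul, hzero, mul_zero]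
  have hΦ1 := key s₁ h1
  have hΦ2 := key s₂ h2
  have hint : ∀ s : ℝ,
      Integrable (fun u => g u * Real.exp (s*(u - u₀)) * Real.exp (-u^2/(2*τ^2))) := by
    intro s
    refine (integrable_mul_expquad hτ hgc hgb s (-(s*u₀))).congr
      (Filter.Eventually.of_forall fun u => ?_)
    simp only
    rw [show s*u + -(s*u₀) = s*(u - u₀) from by ring]
  set F : ℝ → ℝ := fun u => g u * (Real.exp (s₂*(u - u₀)) - Real.exp (s₁*(u - u₀)))
      * Real.exp (-u^2/(2*τ^2)) with hF_def
  have hFeq : F = fun u => (g u * Real.exp (s₂*(u - u₀)) * Real.exp (-u^2/(2*τ^2)))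
      - (g u * Real.exp (s₁*(u - u₀)) * Real.exp (-u^2/(2*τ^2))) := by
    funext u
    simp only [hF_def]
    ring
  have hFint : Integrable F := by
    rw [hFeq]
    exact (hint s₂).sub (hint s₁)
  have hFval : ∫ u, F u = 0 := by
    rw [hFeq, integral_sub (hint s₂) (hint s₁), hΦ2, hΦ1, sub_zero]
  have hFpos : ∀ u, u ≠ u₀ → 0 < F u := by
    intro u hu
    have hW := Real.exp_pos (-u^2/(2*τ^2))
    rcases hu.lt_or_gt with hlt | hlt
    · have h3 : g u < 0 := hgneg u hlt
      have h4 : Real.exp (s₂*(u - u₀)) < Real.exp (s₁*(u - u₀)) := by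
        apply Real.exp_lt_exp.mpr
        nlinarith
      have hprod : 0 < -g u * (Real.exp (s₁*(u - u₀)) - Real.exp (s₂*(u - u₀)))
          * Real.exp (-u^2/(2*τ^2)) :=
        mul_pos (mul_pos (by linarith) (by linarith)) hW
      simp only [hF_def]
      nlinarith [hprod]
    · have h3 : 0 < g u := hgpos u hlt
      have h4 : Real.exp (s₁*(u - u₀)) < Real.exp (s₂*(u - u₀)) := by
        apply Real.exp_lt_exp.mpr
        nlinarith
      simp only [hF_def]
      exact mul_pos (mul_pos h3 (by linarith)) hW
  have hFnonneg : ∀ u, 0 ≤ F u := by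
    intro u
    rcases eq_or_ne u u₀ with rfl | hu
    · simp [hF_def, hg0]
    · exact (hFpos u hu).le
  have hpos : 0 < ∫ u, F u := by
    rw [integral_pos_iff_support_of_nonneg_ae (Filter.Eventually.of_forall hFnonneg) hFint]
    have hsub : Set.Ioi u₀ ⊆ Function.support F := fun u hu => (hFpos u (ne_of_gt hu)).ne'
    refine lt_of_lt_of_le ?_ (measure_mono hsub)
    rw [Real.volume_Ioi]
    simp
  rw [hFval] at hpos
  exact lt_irrefl 0 hpos

/-- If the two logistic curves have the same slope but different intercepts,
the difference integral is strictly positive. -/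
lemma const_sign_contra {τ a₁ a₂ b s : ℝ} (hτ : 0 < τ) (ha : a₂ < a₁)
    (h1 : ∫ u, (lg (a₁ + b*u) - lg (a₂ + b*u)) * Real.exp (s*u)
        * Real.exp (-u^2/(2*τ^2)) = 0) : False := by
  set F : ℝ → ℝ := fun u => (lg (a₁ + b*u) - lg (a₂ + b*u)) * Real.exp (s*u)
      * Real.exp (-u^2/(2*τ^2)) with hF_def
  have hFpos : ∀ u, 0 < F u := by
    intro u
    have h3 : lg (a₂ + b*u) < lg (a₁ + b*u) := lg_strictMono (by linarith)
    have h4 := Real.exp_pos (s*u)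
    have h5 := Real.exp_pos (-u^2/(2*τ^2))
    simp only [hF_def]
    exact mul_pos (mul_pos (by linarith) h4) h5
  have hgc : Continuous (fun u : ℝ => lg (a₁ + b*u) - lg (a₂ + b*u)) :=
    (continuous_lg_affine a₁ b).sub (continuous_lg_affine a₂ b)
  have hgb : ∀ u : ℝ, |lg (a₁ + b*u) - lg (a₂ + b*u)| ≤ 2 := by
    intro u
    have ha1 := lg_abs_le_one (a₁ + b*u)
    have ha2 := lg_abs_le_one (a₂ + b*u)
    rw [abs_le] at ha1 ha2 ⊢
    constructor <;> [linarith; linarith]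
  have hFint : Integrable F := integrable_mul_exp_lin hτ hgc hgb s
  have hpos : 0 < ∫ u, F u := by
    rw [integral_pos_iff_support_of_nonneg_ae
      (Filter.Eventually.of_forall fun u => (hFpos u).le) hFint]
    have hsub : Set.univ ⊆ Function.support F := fun u _ => (hFpos u).ne'
    refine lt_of_lt_of_le ?_ (measure_mono hsub)
    rw [Real.volume_univ]
    simp
  rw [h1] at hpos
  exact lt_irrefl 0 hpos

/-- Identifiability with positive slopes and positive Berkson error. -/
lemma keyPos {τ a₁ b₁ a₂ b₂ x₁ x₂ : ℝ} (hτ : 0 < τ) (hb₁ : 0 < b₁) (hb₂ : 0 < b₂)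
    (hx : x₁ < x₂)
    (h1 : L0 (a₁ + b₁*x₁) (b₁^2*τ^2) = L0 (a₂ + b₂*x₁) (b₂^2*τ^2))
    (h2 : L0 (a₁ + b₁*x₂) (b₁^2*τ^2) = L0 (a₂ + b₂*x₂) (b₂^2*τ^2)) :
    a₁ = a₂ ∧ b₁ = b₂ := by
  have hz1 := psi_zero hτ hb₁ hb₂ a₁ a₂ x₁ h1
  have hz2 := psi_zero hτ hb₁ hb₂ a₁ a₂ x₂ h2
  have hτ2 : (0:ℝ) < τ^2 := by positivity
  have hs : x₁/τ^2 < x₂/τ^2 := by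
    rw [div_lt_div_iff₀ hτ2 hτ2]
    nlinarith
  have hbb : b₁ = b₂ := by
    by_contra hne
    rcases lt_or_gt_of_ne hne with hlt | hgt
    · have hneg : ∀ (s : ℝ),
          (∫ u, (lg (a₁ + b₁*u) - lg (a₂ + b₂*u)) * Real.exp (s*u)
            * Real.exp (-u^2/(2*τ^2)) = 0) →
          ∫ u, (lg (a₂ + b₂*u) - lg (a₁ + b₁*u)) * Real.exp (s*u)
            * Real.exp (-u^2/(2*τ^2)) = 0 := by
        intro s hzero
        have hfe : (fun u => (lg (a₂ + b₂*u) - lg (a₁ + b₁*u)) * Real.exp (s*u)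
              * Real.exp (-u^2/(2*τ^2)))
            = fun u => -((lg (a₁ + b₁*u) - lg (a₂ + b₂*u)) * Real.exp (s*u)
              * Real.exp (-u^2/(2*τ^2))) := by
          funext u
          ring
        rw [hfe, integral_neg, hzero, neg_zero]
      exact two_zero_contra hτ hlt hs (hneg _ hz1) (hneg _ hz2)
    · exact two_zero_contra hτ hgt hs hz1 hz2
  subst hbb
  refine ⟨?_, rfl⟩
  by_contra hane
  rcases lt_or_gt_of_ne hane with hlt | hgt
  · have hfe : (fun u => (lg (a₂ + b₁*u) - lg (a₁ + b₁*u)) * Real.exp ((x₁/τ^2)*u)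
          * Real.exp (-u^2/(2*τ^2)))
        = fun u => -((lg (a₁ + b₁*u) - lg (a₂ + b₁*u)) * Real.exp ((x₁/τ^2)*u)
          * Real.exp (-u^2/(2*τ^2))) := by
      funext u
      ring
    have hz1' : ∫ u, (lg (a₂ + b₁*u) - lg (a₁ + b₁*u)) * Real.exp ((x₁/τ^2)*u)
        * Real.exp (-u^2/(2*τ^2)) = 0 := by
      rw [hfe, integral_neg, hz1, neg_zero]
    exact const_sign_contra hτ hlt hz1'
  · exact const_sign_contra hτ hgt hz1

/-- Identifiability from agreement at two distinct points (general case). -/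
lemma keyLemma {τ a₁ b₁ a₂ b₂ x₁ x₂ : ℝ} (hτ : 0 ≤ τ) (hx : x₁ < x₂)
    (h1 : L0 (a₁ + b₁*x₁) (b₁^2*τ^2) = L0 (a₂ + b₂*x₁) (b₂^2*τ^2))
    (h2 : L0 (a₁ + b₁*x₂) (b₁^2*τ^2) = L0 (a₂ + b₂*x₂) (b₂^2*τ^2)) :
    a₁ = a₂ ∧ b₁ = b₂ := by
  rcases lt_trichotomy b₁ 0 with hb1 | hb1 | hb1
  · -- b₁ < 0 forces b₂ < 0
    have hmono : L0 (a₁ + b₁*x₂) (b₁^2*τ^2) < L0 (a₁ + b₁*x₁) (b₁^2*τ^2) :=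
      L0_strictMono _ (by nlinarith)
    rw [h1, h2] at hmono
    have hb2 : b₂ < 0 := by
      have := L0_lt_L0_iff.mp hmono
      nlinarith
    rcases eq_or_lt_of_le hτ with hτ0 | hτpos
    · -- τ = 0 : plain logistic regression
      rw [← hτ0] at h1 h2
      have hz : ∀ b : ℝ, b^2*(0:ℝ)^2 = 0 := by intro b; ring
      rw [hz b₁, hz b₂, L0_zero, L0_zero] at h1 h2
      have e1 := lg_inj h1
      have e2 := lg_inj h2
      have h3 : b₁*(x₂ - x₁) = b₂*(x₂ - x₁) := by nlinarith
      have hbb : b₁ = b₂ := mul_right_cancel₀ (sub_ne_zero.mpr hx.ne') h3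
      constructor
      · rw [hbb] at e1; linarith
      · exact hbb
    · -- τ > 0 : reflect to positive slopes
      have h1' : L0 (a₁ + (-b₁)*(-x₂)) ((-b₁)^2*τ^2) = L0 (a₂ + (-b₂)*(-x₂)) ((-b₂)^2*τ^2) := by
        rw [neg_mul_neg, neg_mul_neg, neg_pow, neg_pow]
        simpa using h2
      have h2' : L0 (a₁ + (-b₁)*(-x₁)) ((-b₁)^2*τ^2) = L0 (a₂ + (-b₂)*(-x₁)) ((-b₂)^2*τ^2) := by
        rw [neg_mul_neg, neg_mul_neg, neg_pow, neg_pow]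
        simpa using h1
      obtain ⟨ha, hb⟩ := keyPos hτpos (by linarith : (0:ℝ) < -b₁) (by linarith : (0:ℝ) < -b₂)
        (by linarith : -x₂ < -x₁) h1' h2'
      exact ⟨ha, by linarith⟩
  · -- b₁ = 0
    subst hb1
    have hz : (0:ℝ)^2*τ^2 = 0 := by ring
    rw [hz, zero_mul, add_zero, L0_zero] at h1 h2
    have e : L0 (a₂ + b₂*x₁) (b₂^2*τ^2) = L0 (a₂ + b₂*x₂) (b₂^2*τ^2) := by
      rw [← h1, ← h2]
    have e' := L0_inj e
    have hb2 : b₂ = 0 := by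
      have h3 : b₂*(x₂ - x₁) = 0 := by nlinarith
      rcases mul_eq_zero.mp h3 with h4 | h4
      · exact h4
      · exact absurd h4 (sub_ne_zero.mpr hx.ne')
    subst hb2
    rw [hz, zero_mul, add_zero, L0_zero] at h1
    exact ⟨lg_inj h1, rfl⟩
  · -- b₁ > 0 forces b₂ > 0
    have hmono : L0 (a₁ + b₁*x₁) (b₁^2*τ^2) < L0 (a₁ + b₁*x₂) (b₁^2*τ^2) :=
      L0_strictMono _ (by nlinarith)
    rw [h1, h2] at hmono
    have hb2 : 0 < b₂ := by
      have := L0_lt_L0_iff.mp hmono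
      nlinarith
    rcases eq_or_lt_of_le hτ with hτ0 | hτpos
    · rw [← hτ0] at h1 h2
      have hz : ∀ b : ℝ, b^2*(0:ℝ)^2 = 0 := by intro b; ring
      rw [hz b₁, hz b₂, L0_zero, L0_zero] at h1 h2
      have e1 := lg_inj h1
      have e2 := lg_inj h2
      have h3 : b₁*(x₂ - x₁) = b₂*(x₂ - x₁) := by nlinarith
      have hbb : b₁ = b₂ := mul_right_cancel₀ (sub_ne_zero.mpr hx.ne') h3
      constructor
      · rw [hbb] at e1; linarith
      · exact hbb
    · exact keyPos hτpos hb1 hb2 hx h1 h2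

end BerksonAux

/-- Identifiability of the structural Berkson logistic model with known
error variance: a nondegenerate surrogate regressor distribution suffices. -/
theorem stmt_1 {Ω : Type*} [MeasurableSpace Ω] (P : Measure Ω) [IsProbabilityMeasure P]
    (X : Ω → ℝ) (hX : Measurable X)
    (hnd : ¬ ∃ c : ℝ, ∀ᵐ ω ∂P, X ω = c)
    (τ : ℝ) (hτ : 0 ≤ τ) (β₀₁ β₁₁ β₀₂ β₁₂ : ℝ)
    (h : ∀ᵐ ω ∂P, L0 (β₀₁ + β₁₁ * X ω) (β₁₁ ^ 2 * τ ^ 2)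
        = L0 (β₀₂ + β₁₂ * X ω) (β₁₂ ^ 2 * τ ^ 2)) :
    β₀₁ = β₀₂ ∧ β₁₁ = β₁₂ := by
  have hex : ∃ ω₁ ω₂ : Ω,
      (L0 (β₀₁ + β₁₁ * X ω₁) (β₁₁ ^ 2 * τ ^ 2) = L0 (β₀₂ + β₁₂ * X ω₁) (β₁₂ ^ 2 * τ ^ 2)) ∧
      (L0 (β₀₁ + β₁₁ * X ω₂) (β₁₁ ^ 2 * τ ^ 2) = L0 (β₀₂ + β₁₂ * X ω₂) (β₁₂ ^ 2 * τ ^ 2)) ∧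
      X ω₁ ≠ X ω₂ := by
    by_contra hc
    push_neg at hc
    have hne : (MeasureTheory.ae P).NeBot :=
      ae_neBot.mpr (IsProbabilityMeasure.ne_zero P)
    obtain ⟨ω₀, hω₀⟩ := h.exists
    refine hnd ⟨X ω₀, ?_⟩
    exact h.mono fun ω hω => hc ω ω₀ hω hω₀
  obtain ⟨ω₁, ω₂, h₁, h₂, hne⟩ := hex
  rcases hne.lt_or_gt with hlt | hlt
  · exact BerksonAux.keyLemma hτ hlt h₁ h₂
  · exact BerksonAux.keyLemma hτ hlt h₂ h₁
end

section
/- Let η be a real random variable with E|η|³ < ∞ and let ξ ~ N(0, 1) be independent of η. Let p_ζ denote the probability density of ζ = ξ + η, so p_ζ(z) = (1/√(2π)) E[e^{−(z−η)²/2}]. Then z ↦ ln p_ζ(z) is three times differentiable and for every z ∈ ℝ, d³/dz³ (ln p_ζ(z)) = m₃(z) − 3 m₂(z) m₁(z) + 2 m₁(z)³, where mₖ(z) = E[ηᵏ e^{−(z−η)²/2}] / E[e^{−(z−η)²/2}] is the k-th moment of the conditional distribution of η given ζ = z; that is, the third logarithmic derivative of the density of ζ equals the third conditional central moment μ₃[η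 | ζ = z]. -/
open MeasureTheory ProbabilityTheory Real

section Aux

variable {Ω : Type*} [MeasurableSpace Ω] (P : Measure Ω) [IsProbabilityMeasure P]
  (η : Ω → ℝ) (hη : Measurable η) (hη3 : Integrable (fun ω => |η ω| ^ 3) P)

include hη hη3 in
lemma aux_int_abs_pow (k : ℕ) (hk : k ≤ 3) :
    Integrable (fun ω => |η ω| ^ k) P := by
  have hmeas : AEStronglyMeasurable (fun ω => |η ω| ^ k) P :=
    (hη.abs.pow_const k).aestronglyMeasurable
  refine Integrable.mono' ((integrable_const (1:ℝ)).add hη3) hmeas ?_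
  filter_upwards with ω
  have h0 : (0:ℝ) ≤ |η ω| := abs_nonneg _
  rw [Real.norm_eq_abs, abs_of_nonneg (pow_nonneg h0 _)]
  rcases le_total (|η ω|) 1 with h | h
  · calc |η ω| ^ k ≤ 1 ^ k := pow_le_pow_left₀ h0 h k
      _ = 1 := one_pow k
      _ ≤ 1 + |η ω| ^ 3 := le_add_of_nonneg_right (pow_nonneg h0 _)
  · calc |η ω| ^ k ≤ |η ω| ^ 3 := pow_le_pow_right₀ h hk
      _ ≤ 1 + |η ω| ^ 3 := le_add_of_nonneg_left one_pos.le

include hη in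
lemma aux_meas (k : ℕ) (z : ℝ) :
    AEStronglyMeasurable (fun ω => (η ω) ^ k * Real.exp (-(z - η ω) ^ 2 / 2)) P :=
  ((hη.pow_const k).mul
    ((((measurable_const.sub hη).pow_const 2).neg.div_const 2).exp)).aestronglyMeasurable

lemma aux_exp_le_one (z y : ℝ) : Real.exp (-(z - y) ^ 2 / 2) ≤ 1 := by
  rw [Real.exp_le_one_iff]
  nlinarith [sq_nonneg (z - y)]

include hη hη3 in
lemma aux_int (k : ℕ) (hk : k ≤ 3) (z : ℝ) :
    Integrable (fun ω => (η ω) ^ k * Real.exp (-(z - η ω) ^ 2 / 2)) P := by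
  refine (aux_int_abs_pow P η hη hη3 k hk).mono' (aux_meas P η hη k z) ?_
  filter_upwards with ω
  rw [Real.norm_eq_abs, abs_mul, abs_pow, Real.abs_exp]
  calc |η ω| ^ k * Real.exp (-(z - η ω) ^ 2 / 2) ≤ |η ω| ^ k * 1 :=
        mul_le_mul_of_nonneg_left (aux_exp_le_one z _) (pow_nonneg (abs_nonneg _) _)
    _ = |η ω| ^ k := mul_one _

include hη hη3 in
lemma aux_pos (z : ℝ) :
    0 < ∫ ω, (η ω) ^ 0 * Real.exp (-(z - η ω) ^ 2 / 2) ∂P := by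
  rw [integral_pos_iff_support_of_nonneg
    (fun ω => by positivity) (aux_int P η hη hη3 0 (by norm_num) z)]
  have hs : (Function.support fun ω => (η ω) ^ 0 * Real.exp (-(z - η ω) ^ 2 / 2))
      = Set.univ := by
    ext ω
    simp [Function.mem_support, (Real.exp_pos _).ne']
  rw [hs]
  simp

include hη hη3 in
lemma aux_hasDeriv (k : ℕ) (hk : k ≤ 2) (z : ℝ) :
    HasDerivAt (fun t => ∫ ω, (η ω) ^ k * Real.exp (-(t - η ω) ^ 2 / 2) ∂P)
      ((∫ ω, (η ω) ^ (k + 1) * Real.exp (-(z - η ω) ^ 2 / 2) ∂P)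
        - z * ∫ ω, (η ω) ^ k * Real.exp (-(z - η ω) ^ 2 / 2) ∂P) z := by
  have key := hasDerivAt_integral_of_dominated_loc_of_deriv_le
    (F := fun t ω => (η ω) ^ k * Real.exp (-(t - η ω) ^ 2 / 2))
    (F' := fun t ω => (η ω) ^ k * ((η ω - t) * Real.exp (-(t - η ω) ^ 2 / 2)))
    (bound := fun ω => |η ω| ^ k * (|η ω| + |z| + 1))
    (μ := P) (x₀ := z) (Metric.ball_mem_nhds z one_pos)
    (Filter.Eventually.of_forall fun t => aux_meas P η hη k t)
    (aux_int P η hη hη3 k (by omega) z)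
    ?_ ?_ ?_ ?_
  · obtain ⟨-, hD⟩ := key
    have heq : ∀ ω, (η ω) ^ k * ((η ω - z) * Real.exp (-(z - η ω) ^ 2 / 2))
        = (η ω) ^ (k + 1) * Real.exp (-(z - η ω) ^ 2 / 2)
          - z * ((η ω) ^ k * Real.exp (-(z - η ω) ^ 2 / 2)) := by
      intro ω; ring
    have hint : (∫ ω, (η ω) ^ k * ((η ω - z) * Real.exp (-(z - η ω) ^ 2 / 2)) ∂P)
        = (∫ ω, (η ω) ^ (k + 1) * Real.exp (-(z - η ω) ^ 2 / 2) ∂P)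
          - z * ∫ ω, (η ω) ^ k * Real.exp (-(z - η ω) ^ 2 / 2) ∂P := by
      rw [show (fun ω => (η ω) ^ k * ((η ω - z) * Real.exp (-(z - η ω) ^ 2 / 2)))
          = fun ω => (η ω) ^ (k + 1) * Real.exp (-(z - η ω) ^ 2 / 2)
            - z * ((η ω) ^ k * Real.exp (-(z - η ω) ^ 2 / 2)) from funext heq,
        integral_sub (aux_int P η hη hη3 (k + 1) (by omega) z)
          ((aux_int P η hη hη3 k (by omega) z).const_mul z),
        integral_const_mul]
    rwa [hint] at hD
  · exact ((hη.pow_const k).mul ((hη.sub measurable_const).mul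
      ((((measurable_const.sub hη).pow_const 2).neg.div_const 2).exp))).aestronglyMeasurable
  · filter_upwards with ω t ht
    rw [Real.norm_eq_abs, abs_mul, abs_mul, abs_pow, Real.abs_exp]
    have h1 : Real.exp (-(t - η ω) ^ 2 / 2) ≤ 1 := aux_exp_le_one t _
    have h2 : |η ω - t| ≤ |η ω| + |z| + 1 := by
      have := abs_sub_abs_le_abs_sub t z
      have ht' : |t - z| < 1 := by simpa [Real.dist_eq] using ht
      calc |η ω - t| ≤ |η ω| + |t| := abs_sub _ _
        _ ≤ |η ω| + (|z| + 1) := by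
            have : |t| ≤ |z| + |t - z| := by
              calc |t| = |z + (t - z)| := by ring_nf
                _ ≤ |z| + |t - z| := abs_add_le _ _
            linarith
        _ = |η ω| + |z| + 1 := by ring
    calc |η ω| ^ k * (|η ω - t| * Real.exp (-(t - η ω) ^ 2 / 2))
        ≤ |η ω| ^ k * ((|η ω| + |z| + 1) * 1) := by
          apply mul_le_mul_of_nonneg_left _ (pow_nonneg (abs_nonneg _) _)
          exact mul_le_mul h2 h1 (Real.exp_pos _).le (by positivity)
      _ = |η ω| ^ k * (|η ω| + |z| + 1) := by ring
  · have : (fun ω => |η ω| ^ k * (|η ω| + |z| + 1))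
        = fun ω => |η ω| ^ (k + 1) + (|z| + 1) * |η ω| ^ k := by
      funext ω
      rw [pow_succ]
      ring
    rw [this]
    exact (aux_int_abs_pow P η hη hη3 (k + 1) (by omega)).add
      ((aux_int_abs_pow P η hη hη3 k (by omega)).const_mul (|z| + 1))
  · filter_upwards with ω t ht
    have h1 : HasDerivAt (fun x : ℝ => -(x - η ω) ^ 2 / 2) (η ω - t) t := by
      have : HasDerivAt (fun x : ℝ => x - η ω) 1 t :=
        (hasDerivAt_id t).sub_const (η ω)
      have h2 := ((this.pow 2).neg.div_const 2)
      refine h2.congr_deriv ?_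
      simp
      ring
    have := (h1.exp).const_mul ((η ω) ^ k)
    refine this.congr_deriv ?_
    ring

end Aux

/-- Third logarithmic derivative of the density of `ζ = ξ + η`, `ξ ~ N(0,1)`
independent of `η`: with `p_ζ(z) = (1/√(2π)) E[exp (−(z−η)²/2)]` and
`mₖ(z) = E[ηᵏ exp (−(z−η)²/2)] / E[exp (−(z−η)²/2)]` (the `k`-th conditional
moment of `η` given `ζ = z`), `ln p_ζ` is three times differentiable and
`(ln p_ζ)‴(z) = m₃(z) − 3 m₂(z) m₁(z) + 2 m₁(z)³`, the third conditional
central moment `μ₃[η ∣ ζ = z]`. -/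
theorem stmt_11 {Ω : Type*} [MeasurableSpace Ω] (P : Measure Ω) [IsProbabilityMeasure P]
    (η : Ω → ℝ) (hη : Measurable η)
    (hη3 : Integrable (fun ω => |η ω| ^ 3) P)
    (pζ : ℝ → ℝ)
    (hpζ : ∀ z : ℝ, pζ z
      = (Real.sqrt (2 * Real.pi))⁻¹ * ∫ ω, Real.exp (-(z - η ω) ^ 2 / 2) ∂P)
    (m : ℕ → ℝ → ℝ)
    (hm : ∀ (k : ℕ) (z : ℝ), m k z
      = (∫ ω, (η ω) ^ k * Real.exp (-(z - η ω) ^ 2 / 2) ∂P)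
        / ∫ ω, Real.exp (-(z - η ω) ^ 2 / 2) ∂P) :
    (∀ z : ℝ, DifferentiableAt ℝ (fun t => Real.log (pζ t)) z) ∧
    (∀ z : ℝ, DifferentiableAt ℝ (deriv (fun t => Real.log (pζ t))) z) ∧
    (∀ z : ℝ, DifferentiableAt ℝ (deriv (deriv (fun t => Real.log (pζ t)))) z) ∧
    (∀ z : ℝ, iteratedDeriv 3 (fun t => Real.log (pζ t)) z
      = m 3 z - 3 * m 2 z * m 1 z + 2 * (m 1 z) ^ 3) := by
  set F : ℕ → ℝ → ℝ := fun k z => ∫ ω, (η ω) ^ k * Real.exp (-(z - η ω) ^ 2 / 2) ∂P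
    with hF
  have hpos : ∀ z, 0 < F 0 z := fun z => aux_pos P η hη hη3 z
  have hFd : ∀ k, k ≤ 2 → ∀ z, HasDerivAt (F k) (F (k + 1) z - z * F k z) z :=
    fun k hk z => aux_hasDeriv P η hη hη3 k hk z
  have hmF : ∀ k z, m k z = F k z / F 0 z := by
    intro k z
    rw [hm, hF]
    simp [pow_zero, one_mul]
  -- derivative of conditional moments
  have hmd : ∀ k, k ≤ 2 → ∀ z, HasDerivAt (m k) (m (k + 1) z - m k z * m 1 z) z := by
    intro k hk z
    have hder := (hFd k hk z).div (hFd 0 (by norm_num) z) (hpos z).ne'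
    have hfun : F k / F 0 = m k := funext fun t => (hmF k t).symm
    rw [hfun] at hder
    refine hder.congr_deriv ?_
    rw [hmF, hmF, hmF]
    have h0 := (hpos z).ne'
    field_simp
    ring
  -- first derivative of log pζ
  have hc : (Real.sqrt (2 * Real.pi))⁻¹ ≠ 0 := by positivity
  have hL1 : ∀ z, HasDerivAt (fun t => Real.log (pζ t)) (m 1 z - z) z := by
    intro z
    have heq : (fun t => Real.log (pζ t))
        = fun t => Real.log ((Real.sqrt (2 * Real.pi))⁻¹) + Real.log (F 0 t) := by
      funext t
      rw [hpζ]
      rw [show (∫ ω, Real.exp (-(t - η ω) ^ 2 / 2) ∂P) = F 0 t from by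
        rw [hF]; simp [pow_zero, one_mul]]
      exact Real.log_mul hc (hpos t).ne'
    rw [heq]
    have hd := (((hFd 0 (by norm_num) z).log (hpos z).ne').const_add
      (Real.log ((Real.sqrt (2 * Real.pi))⁻¹)))
    refine hd.congr_deriv ?_
    rw [hmF]
    have h0 := (hpos z).ne'
    field_simp
  have hd1 : deriv (fun t => Real.log (pζ t)) = fun z => m 1 z - z :=
    funext fun z => (hL1 z).deriv
  -- second derivative
  have hL2 : ∀ z, HasDerivAt (fun t => m 1 t - t) (m 2 z - (m 1 z) ^ 2 - 1) z := by
    intro z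
    have := (hmd 1 (by norm_num) z).sub (hasDerivAt_id z)
    refine this.congr_deriv ?_
    ring
  have hd2 : deriv (deriv (fun t => Real.log (pζ t))) = fun z => m 2 z - (m 1 z) ^ 2 - 1 := by
    rw [hd1]
    exact funext fun z => (hL2 z).deriv
  -- third derivative
  have hL3 : ∀ z, HasDerivAt (fun t => m 2 t - (m 1 t) ^ 2 - 1)
      (m 3 z - 3 * m 2 z * m 1 z + 2 * (m 1 z) ^ 3) z := by
    intro z
    have h2 := hmd 2 (by norm_num) z
    have h1 := (hmd 1 (by norm_num) z).pow 2
    have := (h2.sub h1).sub_const 1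
    refine this.congr_deriv ?_
    push_cast
    ring
  refine ⟨fun z => (hL1 z).differentiableAt, fun z => ?_, fun z => ?_, fun z => ?_⟩
  · rw [hd1]
    exact (hL2 z).differentiableAt
  · rw [hd2]
    exact (hL3 z).differentiableAt
  · have h3 : iteratedDeriv 3 (fun t => Real.log (pζ t))
        = deriv (deriv (deriv (fun t => Real.log (pζ t)))) := by
      simp [iteratedDeriv_succ, iteratedDeriv_zero]
    rw [h3, hd2]
    exact (hL3 z).deriv
end

section
/- Let η be a real random variable with E|η|³ < ∞ and let ξ ~ N(μ, σ²), σ > 0, be independent of η. Let p_ζ denote the probability density of ζ = ξ + η. Then for every z ∈ ℝ, d³/dz³ (ln p_ζ(z)) = (1/σ⁶) · (m₃(z) − 3 m₂(z) m₁(z) + 2 m₁(z)³), where mₖ(z) = E[ηᵏ e^{−(z−μ−η)²/(2σ²)}] / E[e^{−(z−μ−η)²/(2σ²)}] is the k-th conditional moment of η given ζ = z; that is, d³/dz³ ln p_ζ(z) = σ⁻⁶ μ₃[η | ζ = z]. -/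
open MeasureTheory ProbabilityTheory Real

private lemma aux_bound (σ : ℝ) (hσ : 0 < σ) (u : ℝ) :
    |u| * Real.exp (-u ^ 2 / (2 * σ ^ 2)) ≤ 2 * σ := by
  have he1 : Real.exp (-u ^ 2 / (2 * σ ^ 2)) ≤ 1 := by
    rw [Real.exp_le_one_iff, div_nonpos_iff]
    right
    exact ⟨by nlinarith [sq_nonneg u], by positivity⟩
  rcases le_total |u| σ with h | h
  · nlinarith [Real.exp_pos (-u ^ 2 / (2 * σ ^ 2)), abs_nonneg u]
  · have hu : 0 < |u| := lt_of_lt_of_le hσ h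
    have hu0 : u ≠ 0 := by simpa using hu.ne'
    have hy : (0:ℝ) < u ^ 2 / (2 * σ ^ 2) := by positivity
    have h2 : u ^ 2 / (2 * σ ^ 2) ≤ Real.exp (u ^ 2 / (2 * σ ^ 2)) := by
      linarith [Real.add_one_le_exp (u ^ 2 / (2 * σ ^ 2))]
    have h3 : Real.exp (-u ^ 2 / (2 * σ ^ 2)) ≤ 2 * σ ^ 2 / u ^ 2 := by
      rw [neg_div, Real.exp_neg]
      calc (Real.exp (u ^ 2 / (2 * σ ^ 2)))⁻¹ ≤ (u ^ 2 / (2 * σ ^ 2))⁻¹ :=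
            inv_anti₀ hy h2
        _ = 2 * σ ^ 2 / u ^ 2 := by rw [inv_div]
    have hu2 : u ^ 2 = |u| ^ 2 := (sq_abs u).symm
    calc |u| * Real.exp (-u ^ 2 / (2 * σ ^ 2)) ≤ |u| * (2 * σ ^ 2 / u ^ 2) :=
          mul_le_mul_of_nonneg_left h3 (abs_nonneg u)
      _ = 2 * σ ^ 2 / |u| := by rw [hu2]; field_simp [hu.ne']
      _ ≤ 2 * σ := by rw [div_le_iff₀ hu]; nlinarith

private lemma aux_gle (σ : ℝ) (hσ : 0 < σ) (u : ℝ) :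
    Real.exp (-u ^ 2 / (2 * σ ^ 2)) ≤ 1 := by
  rw [Real.exp_le_one_iff, div_nonpos_iff]
  right
  exact ⟨by nlinarith [sq_nonneg u], by positivity⟩

private lemma aux_int_s12 {Ω : Type*} [MeasurableSpace Ω] (P : Measure Ω) [IsProbabilityMeasure P]
    (η : Ω → ℝ) (hη : Measurable η) (μ σ : ℝ) (hσ : 0 < σ) (k : ℕ)
    (hik : Integrable (fun ω => |η ω| ^ k) P) (x : ℝ) :
    Integrable (fun ω => η ω ^ k * Real.exp (-(x - μ - η ω) ^ 2 / (2 * σ ^ 2))) P := by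
  apply Integrable.mono' hik
  · apply Measurable.aestronglyMeasurable
    fun_prop
  · filter_upwards with ω
    rw [Real.norm_eq_abs, abs_mul, abs_pow, abs_of_pos (Real.exp_pos _)]
    calc |η ω| ^ k * Real.exp (-(x - μ - η ω) ^ 2 / (2 * σ ^ 2))
        ≤ |η ω| ^ k * 1 :=
          mul_le_mul_of_nonneg_left (aux_gle σ hσ _) (by positivity)
      _ = |η ω| ^ k := mul_one _

private lemma aux_deriv {Ω : Type*} [MeasurableSpace Ω] (P : Measure Ω) [IsProbabilityMeasure P]
    (η : Ω → ℝ) (hη : Measurable η) (μ σ : ℝ) (hσ : 0 < σ) (k : ℕ)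
    (hik : Integrable (fun ω => |η ω| ^ k) P)
    (hik1 : Integrable (fun ω => |η ω| ^ (k + 1)) P) (x₀ : ℝ) :
    HasDerivAt (fun x => ∫ ω, η ω ^ k * Real.exp (-(x - μ - η ω) ^ 2 / (2 * σ ^ 2)) ∂P)
      (((∫ ω, η ω ^ (k + 1) * Real.exp (-(x₀ - μ - η ω) ^ 2 / (2 * σ ^ 2)) ∂P)
          - (x₀ - μ) * ∫ ω, η ω ^ k * Real.exp (-(x₀ - μ - η ω) ^ 2 / (2 * σ ^ 2)) ∂P)
        / σ ^ 2) x₀ := by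
  have hσ2 : (0:ℝ) < σ ^ 2 := by positivity
  have main := hasDerivAt_integral_of_dominated_loc_of_deriv_le
    (F := fun x ω => η ω ^ k * Real.exp (-(x - μ - η ω) ^ 2 / (2 * σ ^ 2)))
    (F' := fun x ω => η ω ^ k *
      (-((x - μ - η ω) / σ ^ 2) * Real.exp (-(x - μ - η ω) ^ 2 / (2 * σ ^ 2))))
    (bound := fun ω => |η ω| ^ k * (2 * σ) / σ ^ 2)
    (μ := P) (x₀ := x₀) (Metric.ball_mem_nhds x₀ one_pos)
    (Filter.Eventually.of_forall fun x =>
      (by fun_prop : Measurable fun ω =>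
        η ω ^ k * Real.exp (-(x - μ - η ω) ^ 2 / (2 * σ ^ 2))).aestronglyMeasurable)
    (aux_int_s12 P η hη μ σ hσ k hik x₀)
    ((by fun_prop : Measurable fun ω => η ω ^ k *
      (-((x₀ - μ - η ω) / σ ^ 2) * Real.exp (-(x₀ - μ - η ω) ^ 2 / (2 * σ ^ 2)))).aestronglyMeasurable)
    (Filter.Eventually.of_forall fun ω => fun x _ => by
      have key : |η ω ^ k * (-((x - μ - η ω) / σ ^ 2) *
            Real.exp (-(x - μ - η ω) ^ 2 / (2 * σ ^ 2)))|
          = |η ω| ^ k * (|x - μ - η ω| * Real.exp (-(x - μ - η ω) ^ 2 / (2 * σ ^ 2))) / σ ^ 2 := by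
        rw [abs_mul, abs_mul, abs_neg, abs_div, abs_pow, abs_of_pos (Real.exp_pos _),
          abs_of_pos hσ2]
        ring
      rw [Real.norm_eq_abs, key, div_le_div_iff_of_pos_right hσ2]
      exact mul_le_mul_of_nonneg_left (aux_bound σ hσ _) (by positivity))
    ((hik.mul_const (2 * σ)).div_const (σ ^ 2))
    (Filter.Eventually.of_forall fun ω => fun x _ => by
      have h1 : HasDerivAt (fun x : ℝ => x - μ - η ω) 1 x :=
        ((hasDerivAt_id x).sub_const μ).sub_const (η ω)
      have h2 := (((h1.pow 2).neg).div_const (2 * σ ^ 2)).exp.const_mul (η ω ^ k)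
      refine h2.congr_deriv ?_
      simp only [Pi.neg_apply, Pi.pow_apply]
      push_cast
      field_simp)
  have heq : (∫ ω, η ω ^ k * (-((x₀ - μ - η ω) / σ ^ 2) *
        Real.exp (-(x₀ - μ - η ω) ^ 2 / (2 * σ ^ 2))) ∂P)
      = ((∫ ω, η ω ^ (k + 1) * Real.exp (-(x₀ - μ - η ω) ^ 2 / (2 * σ ^ 2)) ∂P)
          - (x₀ - μ) * ∫ ω, η ω ^ k * Real.exp (-(x₀ - μ - η ω) ^ 2 / (2 * σ ^ 2)) ∂P)
        / σ ^ 2 := by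
    have hfe : (fun ω => η ω ^ k * (-((x₀ - μ - η ω) / σ ^ 2) *
          Real.exp (-(x₀ - μ - η ω) ^ 2 / (2 * σ ^ 2))))
        = fun ω => (σ ^ 2)⁻¹ * (η ω ^ (k + 1) * Real.exp (-(x₀ - μ - η ω) ^ 2 / (2 * σ ^ 2)))
          - ((x₀ - μ) / σ ^ 2) * (η ω ^ k * Real.exp (-(x₀ - μ - η ω) ^ 2 / (2 * σ ^ 2))) := by
      funext ω
      field_simp
      ring
    rw [hfe, integral_sub ((aux_int_s12 P η hη μ σ hσ (k + 1) hik1 x₀).const_mul _)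
      ((aux_int_s12 P η hη μ σ hσ k hik x₀).const_mul _), integral_const_mul, integral_const_mul]
    field_simp
  have := main.2
  rwa [heq] at this

private lemma aux_main (c μ σ : ℝ) (hc : 0 < c) (hσ : 0 < σ) (G I1 I2 I3 : ℝ → ℝ)
    (hG : ∀ x, 0 < G x)
    (hG' : ∀ x, HasDerivAt G ((I1 x - (x - μ) * G x) / σ ^ 2) x)
    (hI1' : ∀ x, HasDerivAt I1 ((I2 x - (x - μ) * I1 x) / σ ^ 2) x)
    (hI2' : ∀ x, HasDerivAt I2 ((I3 x - (x - μ) * I2 x) / σ ^ 2) x) (z : ℝ) :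
    iteratedDeriv 3 (fun t => Real.log (c * G t)) z
      = (1 / σ ^ 6) * (I3 z / G z - 3 * (I2 z / G z) * (I1 z / G z) + 2 * (I1 z / G z) ^ 3) := by
  have hσ2 : (σ:ℝ) ^ 2 ≠ 0 := by positivity
  have hD1 : ∀ x, HasDerivAt (fun t => Real.log (c * G t))
      ((I1 x / G x - (x - μ)) / σ ^ 2) x := by
    intro x
    have h := ((hG' x).const_mul c).log (mul_pos hc (hG x)).ne'
    convert h using 1
    have := (hG x).ne'
    field_simp
  have hd1 : deriv (fun t => Real.log (c * G t)) = fun x => (I1 x / G x - (x - μ)) / σ ^ 2 :=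
    funext fun x => (hD1 x).deriv
  have hD2 : ∀ x, HasDerivAt (fun x => (I1 x / G x - (x - μ)) / σ ^ 2)
      ((((I2 x - (x - μ) * I1 x) / σ ^ 2 * G x - I1 x * ((I1 x - (x - μ) * G x) / σ ^ 2))
          / (G x) ^ 2 - 1) / σ ^ 2) x := by
    intro x
    exact (((hI1' x).div (hG' x) (hG x).ne').sub
      (((hasDerivAt_id x).sub_const μ))).div_const (σ ^ 2)
  have hd2 : deriv (fun x => (I1 x / G x - (x - μ)) / σ ^ 2)
      = fun x => ((I2 x * G x - (I1 x) ^ 2) / (G x) ^ 2 / σ ^ 2 - 1) / σ ^ 2 := by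
    funext x
    rw [(hD2 x).deriv]
    have := (hG x).ne'
    field_simp
    ring
  have hN : HasDerivAt (fun x => I2 x * G x - (I1 x) ^ 2)
      (((I3 z - (z - μ) * I2 z) / σ ^ 2 * G z + I2 z * ((I1 z - (z - μ) * G z) / σ ^ 2))
        - 2 * I1 z ^ 1 * ((I2 z - (z - μ) * I1 z) / σ ^ 2)) z :=
    ((hI2' z).mul (hG' z)).sub ((hI1' z).pow 2)
  have hDen : HasDerivAt (fun x => (G x) ^ 2)
      (2 * G z ^ 1 * ((I1 z - (z - μ) * G z) / σ ^ 2)) z := (hG' z).pow 2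
  have hD3 := (((hN.div hDen (pow_ne_zero 2 (hG z).ne')).div_const (σ ^ 2)).sub_const 1).div_const (σ ^ 2)
  have e1 : iteratedDeriv 1 (fun t => Real.log (c * G t))
      = fun x => (I1 x / G x - (x - μ)) / σ ^ 2 := by
    rw [iteratedDeriv_one, hd1]
  have e2 : iteratedDeriv 2 (fun t => Real.log (c * G t))
      = fun x => ((I2 x * G x - (I1 x) ^ 2) / (G x) ^ 2 / σ ^ 2 - 1) / σ ^ 2 := by
    rw [show (2:ℕ) = 1 + 1 from rfl, iteratedDeriv_succ, e1, hd2]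
  rw [show (3:ℕ) = 2 + 1 from rfl, iteratedDeriv_succ, e2, (show HasDerivAt (fun x => ((I2 x * G x - (I1 x) ^ 2) / (G x) ^ 2 / σ ^ 2 - 1) / σ ^ 2) _ z from hD3).deriv]
  have hGz := (hG z).ne'
  rw [show (2 + 1 : ℕ) = 3 from rfl]
  field_simp
  ring

/-- Third logarithmic derivative of the density of `ζ = ξ + η`, where
`ξ ~ N(μ, σ²)`, `σ > 0`, is independent of `η`: with
`p_ζ(z) = (1/(√(2π)σ)) E[exp (−(z−μ−η)²/(2σ²))]` and
`mₖ(z) = E[ηᵏ exp (−(z−μ−η)²/(2σ²))] / E[exp (−(z−μ−η)²/(2σ²))]` the `k`-th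
conditional moment of `η` given `ζ = z`, one has
`(ln p_ζ)‴(z) = σ⁻⁶ (m₃(z) − 3 m₂(z) m₁(z) + 2 m₁(z)³) = σ⁻⁶ μ₃[η ∣ ζ = z]`. -/
theorem stmt_12 {Ω : Type*} [MeasurableSpace Ω] (P : Measure Ω) [IsProbabilityMeasure P]
    (η : Ω → ℝ) (hη : Measurable η)
    (hη3 : Integrable (fun ω => |η ω| ^ 3) P)
    (μ σ : ℝ) (hσ : 0 < σ)
    (pζ : ℝ → ℝ)
    (hpζ : ∀ z : ℝ, pζ z
      = (Real.sqrt (2 * Real.pi) * σ)⁻¹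
          * ∫ ω, Real.exp (-(z - μ - η ω) ^ 2 / (2 * σ ^ 2)) ∂P)
    (m : ℕ → ℝ → ℝ)
    (hm : ∀ (k : ℕ) (z : ℝ), m k z
      = (∫ ω, (η ω) ^ k * Real.exp (-(z - μ - η ω) ^ 2 / (2 * σ ^ 2)) ∂P)
        / ∫ ω, Real.exp (-(z - μ - η ω) ^ 2 / (2 * σ ^ 2)) ∂P) :
    ∀ z : ℝ, iteratedDeriv 3 (fun t => Real.log (pζ t)) z
      = (1 / σ ^ 6) * (m 3 z - 3 * m 2 z * m 1 z + 2 * (m 1 z) ^ 3) := by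
  intro z
  have habs : ∀ k : ℕ, k ≤ 3 → Integrable (fun ω => |η ω| ^ k) P := by
    intro k hk
    apply Integrable.mono' ((integrable_const (1:ℝ)).add hη3)
    · exact (hη.abs.pow_const k).aestronglyMeasurable
    · filter_upwards with ω
      rw [Real.norm_eq_abs, abs_of_nonneg (by positivity)]
      simp only [Pi.add_apply]
      rcases le_total (|η ω|) 1 with h | h
      · have h1 : |η ω| ^ k ≤ 1 := pow_le_one₀ (abs_nonneg _) h
        have h2 : (0:ℝ) ≤ |η ω| ^ 3 := by positivity
        linarith
      · have h1 : |η ω| ^ k ≤ |η ω| ^ 3 := pow_le_pow_right₀ h hk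
        linarith
  -- the functions Iₖ
  set I : ℕ → ℝ → ℝ :=
    fun k x => ∫ ω, η ω ^ k * Real.exp (-(x - μ - η ω) ^ 2 / (2 * σ ^ 2)) ∂P with hI
  have key : ∀ k : ℕ, k ≤ 2 → ∀ x : ℝ,
      HasDerivAt (I k) ((I (k + 1) x - (x - μ) * I k x) / σ ^ 2) x := by
    intro k hk x
    exact aux_deriv P η hη μ σ hσ k (habs k (by omega)) (habs (k + 1) (by omega)) x
  have hGint : ∀ x, (∫ ω, Real.exp (-(x - μ - η ω) ^ 2 / (2 * σ ^ 2)) ∂P) = I 0 x := by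
    intro x
    simp [hI]
  have hGpos : ∀ x, 0 < I 0 x := by
    intro x
    rw [← hGint x]
    exact integral_exp_pos (by simpa using aux_int_s12 P η hη μ σ hσ 0 (habs 0 (by omega)) x)
  have hc : (0:ℝ) < (Real.sqrt (2 * Real.pi) * σ)⁻¹ := by
    have : (0:ℝ) < Real.sqrt (2 * Real.pi) := Real.sqrt_pos.2 (by positivity)
    positivity
  have hfun : (fun t => Real.log (pζ t))
      = fun t => Real.log ((Real.sqrt (2 * Real.pi) * σ)⁻¹ * I 0 t) := by
    funext t
    rw [hpζ t, hGint t]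
  rw [hfun, aux_main _ μ σ hc hσ (I 0) (I 1) (I 2) (I 3) hGpos
    (key 0 (by omega)) (key 1 (by omega)) (key 2 (by omega)) z,
    hm 3 z, hm 2 z, hm 1 z, hGint z]
end

section
/- Let X be a real random variable satisfying: (1) X has a continuously differentiable density p; (2) X is unimodal in the sense that there exists a mode M ∈ ℝ such that sign(p′(x)) = sign(M − x) for all x ∈ ℝ; (3) whenever x₁ < M < x₂ and p(x₁) = p(x₂), one has p′(x₁) > −p′(x₂); and (4) E|X|³ < ∞. Then the third central moment of X is strictly positive: μ₃(X) = E[(X − EX)³] > 0. -/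
open MeasureTheory ProbabilityTheory Real

open Set Filter Topology
open scoped ENNReal NNReal

section auxlemmas

lemma aux_sum_lt {p : ℝ → ℝ} {M : ℝ} (hp : ContDiff ℝ 1 p)
    (hmono : StrictMonoOn p (Iic M)) (hanti : StrictAntiOn p (Ici M))
    (hskew : ∀ x₁ x₂ : ℝ, x₁ < M → M < x₂ → p x₁ = p x₂ → -deriv p x₂ < deriv p x₁)
    {a₁ b₁ a₂ b₂ : ℝ} (ha₁ : a₁ < M) (hb₁ : M < b₁) (ha₂ : a₂ < M) (hb₂ : M < b₂)
    (he₁ : p a₁ = p b₁) (he₂ : p a₂ = p b₂) (hlt : p b₂ < p b₁) :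
    a₁ + b₁ < a₂ + b₂ := by
  have hd : Differentiable ℝ p := hp.differentiable one_ne_zero
  have hc : Continuous p := hd.continuous
  set s := a₁ + b₁ with hs
  set φ : ℝ → ℝ := fun x => p (s - x) - p x with hφ
  have hφc : Continuous φ := (hc.comp (continuous_const.sub continuous_id)).sub hc
  have hφd : ∀ x : ℝ, HasDerivAt φ (-deriv p (s - x) - deriv p x) x := by
    intro x
    have h1 : HasDerivAt (fun x : ℝ => p (s - x)) (deriv p (s - x) * (-1)) x :=
      (hd (s - x)).hasDerivAt.comp x ((hasDerivAt_id x).const_sub s)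
    have h2 := h1.sub (hd x).hasDerivAt
    rw [show -deriv p (s - x) - deriv p x = deriv p (s - x) * (-1) - deriv p x by ring]; exact h2
  have hb₁₂ : b₁ < b₂ := (hanti.lt_iff_gt (le_of_lt hb₂) (le_of_lt hb₁)).mp hlt
  have hφb₁ : φ b₁ = 0 := by simp only [hφ]; rw [show s - b₁ = a₁ by ring, he₁]; ring
  -- key claim : φ < 0 on Ioc b₁ b₂
  have key : ∀ x ∈ Ioc b₁ b₂, φ x < 0 := by
    by_contra hcon
    push_neg at hcon
    obtain ⟨x, hxmem, hxnn⟩ := hcon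
    -- derivative at b₁ is negative
    have hskew1 : 0 < deriv p a₁ + deriv p b₁ := by
      have := hskew a₁ b₁ ha₁ hb₁ he₁; linarith
    have hDb₁ : -deriv p (s - b₁) - deriv p b₁ < 0 := by
      rw [show s - b₁ = a₁ by ring]; linarith
    have hsl := hasDerivAt_iff_tendsto_slope.mp (hφd b₁)
    have hev : ∀ᶠ z in 𝓝[>] b₁, slope φ b₁ z < 0 := by
      have h1 : ∀ᶠ z in 𝓝[≠] b₁, slope φ b₁ z < 0 := hsl.eventually_lt_const hDb₁
      exact h1.filter_mono (nhdsWithin_mono _ (fun z hz => ne_of_gt hz))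
    obtain ⟨u, hu, hsub⟩ := mem_nhdsGT_iff_exists_Ioo_subset.mp hev
    have hneg : ∀ z ∈ Ioo b₁ u, φ z < 0 := by
      intro z hz
      have hslz : slope φ b₁ z < 0 := hsub hz
      rw [slope_def_field, hφb₁, sub_zero, div_neg_iff] at hslz
      rcases hslz with ⟨h1, h2⟩ | ⟨h1, h2⟩
      · linarith [hz.1]
      · exact h1
    -- x₀ := first nonneg point after u
    have hub₂ : u ≤ b₂ := by
      by_contra hub
      push_neg at hub
      exact absurd (hneg x ⟨hxmem.1, lt_of_le_of_lt hxmem.2 hub⟩) (not_lt.mpr hxnn)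
    set S : Set ℝ := Icc u b₂ ∩ φ ⁻¹' (Ici 0) with hS
    have hxS : x ∈ S := by
      constructor
      · refine ⟨?_, hxmem.2⟩
        by_contra hxu
        push_neg at hxu
        exact absurd (hneg x ⟨hxmem.1, hxu⟩) (not_lt.mpr hxnn)
      · exact hxnn
    have hScl : IsClosed S := isClosed_Icc.inter (isClosed_Ici.preimage hφc)
    have hSbdd : BddBelow S := ⟨u, fun z hz => hz.1.1⟩
    set x₀ := sInf S with hx₀
    have hx₀S : x₀ ∈ S := hScl.csInf_mem ⟨x, hxS⟩ hSbdd
    have hx₀u : u ≤ x₀ := hx₀S.1.1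
    have hx₀b₂ : x₀ ≤ b₂ := hx₀S.1.2
    have hb₁x₀ : b₁ < x₀ := lt_of_lt_of_le hu hx₀u
    have hφx₀nn : 0 ≤ φ x₀ := hx₀S.2
    -- φ < 0 strictly before x₀
    have hlt' : ∀ z ∈ Ioo b₁ x₀, φ z < 0 := by
      intro z hz
      rcases lt_or_ge z u with h | h
      · exact hneg z ⟨hz.1, h⟩
      · by_contra hcz
        push_neg at hcz
        have : z ∈ S := ⟨⟨h, le_trans (le_of_lt hz.2) hx₀b₂⟩, hcz⟩
        exact absurd (csInf_le hSbdd this) (not_le.mpr hz.2)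
    -- φ x₀ ≤ 0 by left continuity
    have hφx₀np : φ x₀ ≤ 0 := by
      have htd : Tendsto φ (𝓝[<] x₀) (𝓝 (φ x₀)) :=
        (hφc.continuousAt (x := x₀)).continuousWithinAt.tendsto
      have hevz : ∀ᶠ z in 𝓝[<] x₀, φ z ≤ 0 := by
        filter_upwards [Ioo_mem_nhdsLT_of_mem ⟨hb₁x₀, le_refl x₀⟩] with z hz
        exact le_of_lt (hlt' z hz)
      exact le_of_tendsto htd hevz
    have hφx₀ : φ x₀ = 0 := le_antisymm hφx₀np hφx₀nn
    -- equal levels at s - x₀ < M < x₀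
    have hsx₀ : s - x₀ < M := by linarith
    have hMx₀ : M < x₀ := by linarith
    have heq : p (s - x₀) = p x₀ := by
      have : p (s - x₀) - p x₀ = 0 := hφx₀
      linarith
    have hskew2 := hskew (s - x₀) x₀ hsx₀ hMx₀ heq
    have hD : -deriv p (s - x₀) - deriv p x₀ < 0 := by linarith
    -- but left slopes are nonneg
    have hsl₀ := hasDerivAt_iff_tendsto_slope.mp (hφd x₀)
    have hsl₀' : Tendsto (slope φ x₀) (𝓝[<] x₀) (𝓝 (-deriv p (s - x₀) - deriv p x₀)) :=
      hsl₀.mono_left (nhdsWithin_mono _ (fun z hz => ne_of_lt hz))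
    have hevs : ∀ᶠ z in 𝓝[<] x₀, 0 ≤ slope φ x₀ z := by
      filter_upwards [Ioo_mem_nhdsLT_of_mem ⟨hb₁x₀, le_refl x₀⟩,
        self_mem_nhdsWithin] with z hz hz'
      rw [slope_def_field, hφx₀, sub_zero]
      have h1 : φ z < 0 := hlt' z hz
      have h2 : z - x₀ < 0 := sub_neg.mpr hz'
      have := div_pos_of_neg_of_neg h1 h2
      linarith
    linarith [ge_of_tendsto hsl₀' hevs]
  have hfinal := key b₂ ⟨hb₁₂, le_refl b₂⟩
  have hsb₂ : s - b₂ < a₂ := by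
    by_contra hcc
    push_neg at hcc
    have h1 : p a₂ ≤ p (s - b₂) := by
      rcases eq_or_lt_of_le hcc with h | h
      · rw [h]
      · exact le_of_lt (hmono (le_of_lt ha₂) (show s - b₂ ∈ Iic M by simp only [mem_Iic]; linarith) h)
    have : 0 ≤ φ b₂ := by simp only [hφ]; rw [he₂] at h1; linarith
    linarith
  linarith

lemma aux_layer {p : ℝ → ℝ} (hpm : Measurable p) (hp0 : ∀ x, 0 ≤ p x)
    {y₀ : ℝ} (hb : ∀ x, p x ≤ y₀) {a b : ℝ → ℝ}
    (hset : ∀ y ∈ Ioo (0:ℝ) y₀, {x | y < p x} = Ioo (a y) (b y))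
    (f : ℝ → ℝ) (hfm : Measurable f) (hint : Integrable (fun x => f x * p x)) :
    (∫ x, f x * p x) = (∫ y in Ioo 0 y₀, ∫ x in Ioo (a y) (b y), f x) ∧
      IntegrableOn (fun y => ∫ x in Ioo (a y) (b y), f x) (Ioo 0 y₀) := by
  set A : Set (ℝ × ℝ) := {q | 0 < q.2 ∧ q.2 < p q.1} with hA
  have hAm : MeasurableSet A :=
    (measurableSet_lt measurable_const measurable_snd).inter
      (measurableSet_lt measurable_snd (hpm.comp measurable_fst))
  set F : ℝ × ℝ → ℝ := A.indicator (fun q => f q.1) with hF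
  have hFm : Measurable F := (hfm.comp measurable_fst).indicator hAm
  have hsec : ∀ x : ℝ, (fun y => F (x, y)) = (Ioo 0 (p x)).indicator (fun _ => f x) := by
    intro x
    funext y
    by_cases hy : y ∈ Ioo 0 (p x)
    · rw [Set.indicator_of_mem hy]
      exact Set.indicator_of_mem (show (x, y) ∈ A from ⟨hy.1, hy.2⟩) _
    · rw [Set.indicator_of_notMem hy]
      exact Set.indicator_of_notMem (fun hmem => hy ⟨hmem.1, hmem.2⟩) _
  have h1 : ∀ x : ℝ, (∫ y, F (x, y)) = f x * p x := by
    intro x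
    rw [hsec x, integral_indicator_const _ measurableSet_Ioo]
    simp [Real.volume_Ioo, ENNReal.toReal_ofReal (hp0 x), mul_comm]
    rw [max_eq_left (hp0 x), mul_comm]
  have h2 : ∀ x : ℝ, Integrable (fun y => F (x, y)) volume := by
    intro x
    rw [hsec x]
    exact (integrable_indicator_iff measurableSet_Ioo).mpr
      (integrableOn_const measure_Ioo_lt_top.ne)
  have h3 : Integrable (fun x => ∫ y, ‖F (x, y)‖) volume := by
    apply hint.norm.congr
    filter_upwards with x
    have : (fun y => ‖F (x, y)‖) = (Ioo 0 (p x)).indicator (fun _ => ‖f x‖) := by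
      funext y
      rw [show F (x, y) = ((Ioo 0 (p x)).indicator (fun _ => f x)) y from congrFun (hsec x) y]
      simp only [Set.indicator_apply]
      split <;> simp
    rw [this, integral_indicator_const _ measurableSet_Ioo]
    simp [Real.volume_Ioo, ENNReal.toReal_ofReal (hp0 x), norm_mul, mul_comm,
      abs_of_nonneg (hp0 x)]
    rw [max_eq_left (hp0 x), mul_comm]
  have hFi : Integrable F (volume.prod volume) := by
    refine (integrable_prod_iff hFm.aestronglyMeasurable).mpr ⟨ae_of_all _ h2, h3⟩
  have hswap : ∫ x, ∫ y, F (x, y) = ∫ y, ∫ x, F (x, y) :=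
    integral_integral_swap (by exact hFi)
  have h4 : ∀ y : ℝ, (∫ x, F (x, y)) =
      (Ioo 0 y₀).indicator (fun y => ∫ x in Ioo (a y) (b y), f x) y := by
    intro y
    by_cases hy : y ∈ Ioo 0 y₀
    · rw [Set.indicator_of_mem hy]
      have hxy : (fun x => F (x, y)) = (Ioo (a y) (b y)).indicator f := by
        funext x
        by_cases hx : x ∈ Ioo (a y) (b y)
        · rw [Set.indicator_of_mem hx]
          have : x ∈ {x | y < p x} := by rw [hset y hy]; exact hx
          exact Set.indicator_of_mem (show (x, y) ∈ A from ⟨hy.1, this⟩) _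
        · rw [Set.indicator_of_notMem hx]
          refine Set.indicator_of_notMem (fun hmem => hx ?_) _
          rw [← hset y hy]; exact hmem.2
      rw [hxy, integral_indicator measurableSet_Ioo]
    · rw [Set.indicator_of_notMem hy]
      have hz : (fun x => F (x, y)) = fun _ => (0 : ℝ) := by
        funext x
        refine Set.indicator_of_notMem (fun hmem => ?_) _
        rcases hmem with ⟨hy1, hy2⟩
        simp only [mem_Ioo, not_and, not_lt] at hy
        exact absurd (lt_of_lt_of_le hy2 (hb x)) (not_lt.mpr (hy hy1))
      rw [hz, integral_zero]
  have hGi : Integrable (fun y => ∫ x, F (x, y)) volume := hFi.integral_prod_right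
  constructor
  · calc (∫ x, f x * p x) = ∫ x, ∫ y, F (x, y) := by
          exact (integral_congr_ae (ae_of_all _ h1)).symm
    _ = ∫ y, ∫ x, F (x, y) := hswap
    _ = ∫ y, (Ioo 0 y₀).indicator (fun y => ∫ x in Ioo (a y) (b y), f x) y :=
          integral_congr_ae (ae_of_all _ h4)
    _ = ∫ y in Ioo 0 y₀, ∫ x in Ioo (a y) (b y), f x :=
          integral_indicator measurableSet_Ioo
  · exact (integrable_indicator_iff measurableSet_Ioo).mp
      (hGi.congr (ae_of_all _ h4))

lemma aux_zero {g : ℝ → ℝ} {s : Set ℝ} (hsm : MeasurableSet s) (hgi : IntegrableOn g s)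
    (hnn : ∀ y ∈ s, 0 ≤ g y) (hz : ∫ y in s, g y ≤ 0) {t : Set ℝ} (hts : t ⊆ s)
    (hpos : ∀ y ∈ t, g y ≠ 0) : volume t = 0 := by
  have h0 : ∫ y in s, g y = 0 := le_antisymm hz (setIntegral_nonneg hsm hnn)
  have hae := (setIntegral_eq_zero_iff_of_nonneg_ae
    ((ae_restrict_iff' hsm).mpr (ae_of_all _ hnn)) hgi).mp h0
  have h3 : volume.restrict s {y | ¬ g y = 0} = 0 := ae_iff.mp hae
  have h4 : volume.restrict s t = 0 :=
    measure_mono_null (fun y hy => hpos y hy) h3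
  rwa [Measure.restrict_apply' hsm, inter_eq_self_of_subset_left hts] at h4

lemma aux_final {y₀ μ : ℝ} (hy₀ : 0 < y₀) {a b : ℝ → ℝ} {G3 G1 : ℝ → ℝ}
    (hab : ∀ y ∈ Ioo (0:ℝ) y₀, a y < b y)
    (amono : ∀ y ∈ Ioo (0:ℝ) y₀, ∀ y' ∈ Ioo (0:ℝ) y₀, y < y' → a y < a y')
    (sumanti : ∀ y ∈ Ioo (0:ℝ) y₀, ∀ y' ∈ Ioo (0:ℝ) y₀, y < y' →
      a y' + b y' < a y + b y)
    (f3 : ∀ y ∈ Ioo (0:ℝ) y₀, G3 y = ((b y - μ)^4 - (a y - μ)^4)/4)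
    (f1 : ∀ y ∈ Ioo (0:ℝ) y₀, G1 y = ((b y - μ)^2 - (a y - μ)^2)/2)
    (I3 : IntegrableOn G3 (Ioo 0 y₀)) (I1 : IntegrableOn G1 (Ioo 0 y₀))
    (hG1 : ∫ y in Ioo 0 y₀, G1 y = 0) :
    0 < ∫ y in Ioo 0 y₀, G3 y := by
  set d : ℝ → ℝ := fun y => (a y + b y)/2 - μ with hd
  set h : ℝ → ℝ := fun y => (b y - a y)/2 with hh
  have hhpos : ∀ y ∈ Ioo (0:ℝ) y₀, 0 < h y := fun y hy => by
    simp only [hh]; linarith [hab y hy]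
  have dlt : ∀ y ∈ Ioo (0:ℝ) y₀, ∀ y' ∈ Ioo (0:ℝ) y₀, y < y' → d y' < d y := by
    intro y hy y' hy' hlt
    simp only [hd]
    linarith [sumanti y hy y' hy' hlt]
  have g1e : ∀ y ∈ Ioo (0:ℝ) y₀, G1 y = 2 * d y * h y := by
    intro y hy
    rw [f1 y hy]; simp only [hd, hh]; ring
  have g3e : ∀ y ∈ Ioo (0:ℝ) y₀, G3 y = 2 * d y * h y * ((d y)^2 + (h y)^2) := by
    intro y hy
    rw [f3 y hy]; simp only [hd, hh]; ring
  have hsub : Set.Subsingleton {y | y ∈ Ioo (0:ℝ) y₀ ∧ d y = 0} := by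
    intro y hy y' hy'
    by_contra hne
    rcases lt_or_gt_of_ne hne with hl | hl
    · have := dlt y hy.1 y' hy'.1 hl; rw [hy.2, hy'.2] at this; exact lt_irrefl 0 this
    · have := dlt y' hy'.1 y hy.1 hl; rw [hy.2, hy'.2] at this; exact lt_irrefl 0 this
  have hIoovol : volume (Ioo (0:ℝ) y₀) ≠ 0 := by
    rw [Real.volume_Ioo]
    simp only [ne_eq, ENNReal.ofReal_eq_zero, not_le]
    linarith
  -- d takes a positive value somewhere
  have hA : ∃ ya, ya ∈ Ioo (0:ℝ) y₀ ∧ 0 < d ya := by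
    by_contra hcon
    push_neg at hcon
    have hnn : ∀ y ∈ Ioo (0:ℝ) y₀, 0 ≤ -G1 y := by
      intro y hy
      have h1 := hcon y hy
      have h2 := hhpos y hy
      have h3 : G1 y = 2 * d y * h y := g1e y hy
      nlinarith
    have hz : ∫ y in Ioo (0:ℝ) y₀, -G1 y ≤ 0 := by
      rw [integral_neg, hG1]; simp
    have hne0 : ∀ y ∈ {y | y ∈ Ioo (0:ℝ) y₀ ∧ ¬ d y = 0}, -G1 y ≠ 0 := by
      intro y hy
      have h1 : d y < 0 := lt_of_le_of_ne (hcon y hy.1) hy.2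
      have h2 := hhpos y hy.1
      have h3 : G1 y < 0 := by rw [g1e y hy.1]; nlinarith
      exact ne_of_gt (by linarith)
    have hvol : volume {y | y ∈ Ioo (0:ℝ) y₀ ∧ ¬ d y = 0} = 0 :=
      aux_zero measurableSet_Ioo (I1.neg) hnn hz (fun y hy => hy.1) hne0
    have hvol2 : volume {y | y ∈ Ioo (0:ℝ) y₀ ∧ d y = 0} = 0 := hsub.measure_zero volume
    apply hIoovol
    have hsub2 : Ioo (0:ℝ) y₀ ⊆ {y | y ∈ Ioo (0:ℝ) y₀ ∧ d y = 0} ∪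
        {y | y ∈ Ioo (0:ℝ) y₀ ∧ ¬ d y = 0} := by
      intro y hy
      by_cases hq : d y = 0
      · exact Or.inl ⟨hy, hq⟩
      · exact Or.inr ⟨hy, hq⟩
    have hle : volume (Ioo (0:ℝ) y₀) ≤ volume {y | y ∈ Ioo (0:ℝ) y₀ ∧ d y = 0} +
        volume {y | y ∈ Ioo (0:ℝ) y₀ ∧ ¬ d y = 0} :=
      (measure_mono hsub2).trans (measure_union_le _ _)
    rw [hvol, hvol2] at hle
    simpa using hle
  obtain ⟨ya, hya, hdya⟩ := hA
  -- pivot constant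
  set c : ℝ := sInf ((fun y => (h y)^2) '' {y | y ∈ Ioo (0:ℝ) y₀ ∧ 0 < d y}) with hc
  have hcne : ((fun y => (h y)^2) '' {y | y ∈ Ioo (0:ℝ) y₀ ∧ 0 < d y}).Nonempty :=
    ⟨(h ya)^2, ⟨ya, ⟨hya, hdya⟩, rfl⟩⟩
  have hcbdd : BddBelow ((fun y => (h y)^2) '' {y | y ∈ Ioo (0:ℝ) y₀ ∧ 0 < d y}) :=
    ⟨0, fun z hz => by obtain ⟨y, _, rfl⟩ := hz; positivity⟩
  have hcle : ∀ y ∈ Ioo (0:ℝ) y₀, 0 < d y → c ≤ (h y)^2 := fun y hy hdy =>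
    csInf_le hcbdd ⟨y, ⟨hy, hdy⟩, rfl⟩
  have hcge : ∀ y ∈ Ioo (0:ℝ) y₀, d y < 0 → (d y)^2 + (h y)^2 ≤ c := by
    intro y hy hdy
    apply le_csInf hcne
    rintro z ⟨y', ⟨hy', hdy'⟩, rfl⟩
    have hlt : y' < y := by
      rcases lt_trichotomy y y' with hl | he | hl
      · exact absurd (dlt y hy y' hy' hl) (by linarith)
      · rw [he] at hdy; linarith
      · exact hl
    have e1 : h y' - h y - (d y' - d y) = a y - a y' := by
      simp only [hd, hh]; ring
    have e2 : a y' < a y := amono y' hy' y hy hlt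
    have h5 : -d y < h y' - h y := by linarith
    have h6 := hhpos y hy
    show (d y)^2 + (h y)^2 ≤ (h y')^2
    nlinarith [mul_pos h6 (show (0:ℝ) < h y' - h y by linarith),
      mul_pos (show (0:ℝ) < h y' - h y + d y by linarith)
        (show (0:ℝ) < h y' - h y - d y by linarith)]
  -- final positivity
  by_contra hle'
  push_neg at hle'
  have hgi : IntegrableOn (fun y => G3 y - c * G1 y) (Ioo 0 y₀) := I3.sub (I1.const_mul c)
  have hgz : ∫ y in Ioo (0:ℝ) y₀, (G3 y - c * G1 y) ≤ 0 := by
    rw [integral_sub I3 (I1.const_mul c), integral_const_mul, hG1]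
    simpa using hle'
  have hgnn : ∀ y ∈ Ioo (0:ℝ) y₀, 0 ≤ G3 y - c * G1 y := by
    intro y hy
    rw [g1e y hy, g3e y hy]
    have h2 := hhpos y hy
    rcases lt_trichotomy (d y) 0 with h1 | h1 | h1
    · have h3 := hcge y hy h1
      nlinarith [mul_nonneg (show (0:ℝ) ≤ -(2 * d y * h y) by nlinarith)
        (show (0:ℝ) ≤ c - ((d y)^2 + (h y)^2) by linarith)]
    · rw [h1]; norm_num
    · have h3 := hcle y hy h1
      nlinarith [mul_nonneg (show (0:ℝ) ≤ 2 * d y * h y by positivity)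
        (show (0:ℝ) ≤ (d y)^2 + (h y)^2 - c by nlinarith [sq_nonneg (d y)])]
  have hne0 : ∀ y ∈ Ioo (0:ℝ) ya, G3 y - c * G1 y ≠ 0 := by
    intro y hy
    have hymem : y ∈ Ioo (0:ℝ) y₀ := ⟨hy.1, hy.2.trans hya.2⟩
    have hdy : 0 < d y := lt_trans hdya (dlt y hymem ya hya hy.2)
    have h2 := hhpos y hymem
    have h3 := hcle y hymem hdy
    have h7 : (0:ℝ) < 2 * d y * h y := by positivity
    refine ne_of_gt ?_
    rw [g1e y hymem, g3e y hymem]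
    nlinarith [mul_nonneg (le_of_lt h7) (show (0:ℝ) ≤ (h y)^2 - c by linarith),
      mul_pos h7 (pow_pos hdy 2)]
  have hvol := aux_zero measurableSet_Ioo hgi hgnn hgz
    (fun y (hy : y ∈ Ioo (0:ℝ) ya) => show y ∈ Ioo (0:ℝ) y₀ from ⟨hy.1, hy.2.trans hya.2⟩) hne0
  rw [Real.volume_Ioo] at hvol
  simp only [ENNReal.ofReal_eq_zero] at hvol
  linarith [hya.1]

end auxlemmas

/-- If a real random variable `X` has a continuously differentiable density `p`
which is unimodal with mode `M` (`sign p′(x) = sign (M − x)`), such that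
`p(x₁) = p(x₂)` with `x₁ < M < x₂` implies `p′(x₁) > −p′(x₂)`, and
`E|X|³ < ∞`, then the third central moment of `X` is strictly positive. -/
theorem stmt_13 {Ω : Type*} [MeasurableSpace Ω] (P : Measure Ω) [IsProbabilityMeasure P]
    (X : Ω → ℝ) (hX : Measurable X) (p : ℝ → ℝ)
    (hdens : ∀ s : Set ℝ, MeasurableSet s → (P (X ⁻¹' s)).toReal = ∫ x in s, p x)
    (hp : ContDiff ℝ 1 p)
    (M : ℝ)
    (hmode : ∀ x : ℝ, Real.sign (deriv p x) = Real.sign (M - x))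
    (hskew : ∀ x₁ x₂ : ℝ, x₁ < M → M < x₂ → p x₁ = p x₂ →
      -deriv p x₂ < deriv p x₁)
    (hX3 : Integrable (fun ω => |X ω| ^ 3) P) :
    0 < ∫ ω, (X ω - ∫ ω', X ω' ∂P) ^ 3 ∂P := by
  have hd : Differentiable ℝ p := hp.differentiable one_ne_zero
  have hc : Continuous p := hd.continuous
  have hpm : Measurable p := hc.measurable
  -- derivative signs
  have dpos : ∀ x, x < M → 0 < deriv p x := by
    intro x hx
    have h1 := hmode x
    rw [Real.sign_of_pos (show 0 < M - x by linarith)] at h1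
    rcases lt_trichotomy (deriv p x) 0 with h | h | h
    · rw [Real.sign_of_neg h] at h1; norm_num at h1
    · rw [h, Real.sign_zero] at h1; norm_num at h1
    · exact h
  have dneg : ∀ x, M < x → deriv p x < 0 := by
    intro x hx
    have h1 := hmode x
    rw [Real.sign_of_neg (show M - x < 0 by linarith)] at h1
    rcases lt_trichotomy (deriv p x) 0 with h | h | h
    · exact h
    · rw [h, Real.sign_zero] at h1; norm_num at h1
    · rw [Real.sign_of_pos h] at h1; norm_num at h1
  -- monotonicity
  have hmono : StrictMonoOn p (Iic M) := by
    apply strictMonoOn_of_deriv_pos (convex_Iic M) hc.continuousOn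
    intro x hx
    rw [interior_Iic] at hx
    exact dpos x hx
  have hanti : StrictAntiOn p (Ici M) := by
    apply strictAntiOn_of_deriv_neg (convex_Ici M) hc.continuousOn
    intro x hx
    rw [interior_Ici] at hx
    exact dneg x hx
  -- p is nonnegative
  have hp0 : ∀ x, 0 ≤ p x := by
    intro x
    by_contra hneg
    push_neg at hneg
    have hU : IsOpen {z | p z < p x / 2} := isOpen_lt hc continuous_const
    have hxU : x ∈ {z | p z < p x / 2} := by simp; linarith
    obtain ⟨l, r, hlr, hsub⟩ := mem_nhds_iff_exists_Ioo_subset.mp (hU.mem_nhds hxU)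
    have hil : IntegrableOn p (Ioo l r) volume := (hc.integrableOn_Icc).mono_set Ioo_subset_Icc_self
    have h1 : ∫ z in Ioo l r, p z ≤ ∫ z in Ioo l r, (p x / 2) := by
      apply setIntegral_mono_on hil (integrableOn_const measure_Ioo_lt_top.ne)
        measurableSet_Ioo
      intro z hz
      exact le_of_lt (hsub hz)
    rw [setIntegral_const] at h1
    have h2 : (0:ℝ) ≤ ∫ z in Ioo l r, p z := by
      rw [← hdens _ measurableSet_Ioo]
      exact ENNReal.toReal_nonneg
    rw [Real.volume_real_Ioo_of_le (by linarith [hlr.1, hlr.2])] at h1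
    have h3 : 0 < r - l := by linarith [hlr.1, hlr.2]
    rw [smul_eq_mul] at h1
    nlinarith
  -- p integrates to 1
  have hpone : ∫ x, p x = 1 := by
    have h1 := hdens univ MeasurableSet.univ
    simpa using h1.symm
  have hpint : Integrable p volume := by
    by_contra hni
    rw [integral_undef hni] at hpone
    norm_num at hpone
  -- mass bound
  have hmass : ∀ s : Set ℝ, MeasurableSet s → (∫ x in s, p x) ≤ 1 := by
    intro s hs
    rw [← hdens s hs]
    exact ENNReal.toReal_le_of_le_ofReal zero_le_one (by simpa using prob_le_one)
  -- p strictly positive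
  have hppos : ∀ x, 0 < p x := by
    intro x
    rcases le_or_gt x M with h | h
    · have := hmono (show x - 1 ∈ Iic M by simp; linarith) (show x ∈ Iic M from h)
        (by linarith)
      linarith [hp0 (x - 1)]
    · have := hanti (show x ∈ Ici M from le_of_lt h)
        (show x + 1 ∈ Ici M by simp; linarith) (by linarith)
      linarith [hp0 (x + 1)]
  set y₀ := p M with hy₀def
  have hy₀ : 0 < y₀ := hppos M
  have hbd : ∀ x, p x ≤ y₀ := by
    intro x
    rcases lt_trichotomy x M with h | h | h
    · exact le_of_lt (hmono (le_of_lt h) (le_refl M) h)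
    · rw [h]
    · exact le_of_lt (hanti (le_refl M) (le_of_lt h) h)
  -- small values of p far away
  have hsmallL : ∀ y : ℝ, 0 < y → ∃ x, x < M ∧ p x < y := by
    intro y hy
    by_contra hcon
    push_neg at hcon
    have hkey : (2:ℝ) ≤ ∫ x in Ioc (M - 1 - 2/y) (M - 1), p x := by
      have h1 : ∫ x in Ioc (M - 1 - 2/y) (M - 1), (y:ℝ) ≤
          ∫ x in Ioc (M - 1 - 2/y) (M - 1), p x := by
        apply setIntegral_mono_on (integrableOn_const measure_Ioc_lt_top.ne)
          hpint.integrableOn measurableSet_Ioc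
        intro z hz
        exact hcon z (by linarith [hz.2])
      rw [setIntegral_const, Real.volume_real_Ioc,
        show M - 1 - (M - 1 - 2/y) = 2/y by ring,
        max_eq_left (by positivity), smul_eq_mul,
        div_mul_cancel₀ 2 (ne_of_gt hy)] at h1
      exact h1
    linarith [hmass (Ioc (M - 1 - 2/y) (M - 1)) measurableSet_Ioc]
  have hsmallR : ∀ y : ℝ, 0 < y → ∃ x, M < x ∧ p x < y := by
    intro y hy
    by_contra hcon
    push_neg at hcon
    have hkey : (2:ℝ) ≤ ∫ x in Ioc (M + 1) (M + 1 + 2/y), p x := by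
      have h1 : ∫ x in Ioc (M + 1) (M + 1 + 2/y), (y:ℝ) ≤
          ∫ x in Ioc (M + 1) (M + 1 + 2/y), p x := by
        apply setIntegral_mono_on (integrableOn_const measure_Ioc_lt_top.ne)
          hpint.integrableOn measurableSet_Ioc
        intro z hz
        exact hcon z (by linarith [hz.1])
      rw [setIntegral_const, Real.volume_real_Ioc,
        show M + 1 + 2/y - (M + 1) = 2/y by ring,
        max_eq_left (by positivity), smul_eq_mul,
        div_mul_cancel₀ 2 (ne_of_gt hy)] at h1
      exact h1
    linarith [hmass (Ioc (M + 1) (M + 1 + 2/y)) measurableSet_Ioc]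
  -- the level set endpoints
  have exa : ∀ y : ℝ, ∃ x, y ∈ Ioo (0:ℝ) y₀ → x < M ∧ p x = y := by
    intro y
    by_cases hy : y ∈ Ioo (0:ℝ) y₀
    · obtain ⟨x₁, hx₁M, hx₁y⟩ := hsmallL y hy.1
      have hsub := intermediate_value_Icc (le_of_lt hx₁M) hc.continuousOn
      obtain ⟨x, hxmem, hpx⟩ := hsub ⟨le_of_lt hx₁y, le_of_lt hy.2⟩
      refine ⟨x, fun _ => ⟨?_, hpx⟩⟩
      rcases lt_or_eq_of_le hxmem.2 with h | h
      · exact h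
      · exfalso
        have h2 : y₀ = y := by rw [hy₀def, ← h]; exact hpx
        rw [h2] at hy
        exact lt_irrefl y hy.2
    · exact ⟨0, fun h => absurd h hy⟩
  have exb : ∀ y : ℝ, ∃ x, y ∈ Ioo (0:ℝ) y₀ → M < x ∧ p x = y := by
    intro y
    by_cases hy : y ∈ Ioo (0:ℝ) y₀
    · obtain ⟨x₁, hx₁M, hx₁y⟩ := hsmallR y hy.1
      have hsub := intermediate_value_Icc' (le_of_lt hx₁M) hc.continuousOn
      obtain ⟨x, hxmem, hpx⟩ := hsub ⟨le_of_lt hx₁y, le_of_lt hy.2⟩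
      refine ⟨x, fun _ => ⟨?_, hpx⟩⟩
      rcases lt_or_eq_of_le hxmem.1 with h | h
      · exact h
      · exfalso
        have h2 : y₀ = y := by rw [hy₀def, h]; exact hpx
        rw [h2] at hy
        exact lt_irrefl y hy.2
    · exact ⟨0, fun h => absurd h hy⟩
  set a : ℝ → ℝ := fun y => (exa y).choose with ha
  set b : ℝ → ℝ := fun y => (exb y).choose with hb
  have haspec : ∀ y ∈ Ioo (0:ℝ) y₀, a y < M ∧ p (a y) = y := fun y hy =>
    (exa y).choose_spec hy
  have hbspec : ∀ y ∈ Ioo (0:ℝ) y₀, M < b y ∧ p (b y) = y := fun y hy =>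
    (exb y).choose_spec hy
  have hab : ∀ y ∈ Ioo (0:ℝ) y₀, a y < b y := fun y hy =>
    lt_trans (haspec y hy).1 (hbspec y hy).1
  have hset : ∀ y ∈ Ioo (0:ℝ) y₀, {x | y < p x} = Ioo (a y) (b y) := by
    intro y hy
    obtain ⟨haM, hpa⟩ := haspec y hy
    obtain ⟨hbM, hpb⟩ := hbspec y hy
    ext x
    simp only [mem_setOf_eq, mem_Ioo]
    constructor
    · intro hyx
      constructor
      · by_contra hle
        push_neg at hle
        rcases lt_or_eq_of_le hle with h | h
        · have := hmono (show x ∈ Iic M by simp; linarith) (le_of_lt haM) h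
          linarith
        · rw [← h] at hpa; linarith
      · by_contra hle
        push_neg at hle
        rcases lt_or_eq_of_le hle with h | h
        · have := hanti (le_of_lt hbM) (show x ∈ Ici M by simp; linarith) h
          linarith
        · rw [h] at hpb; linarith
    · rintro ⟨h1, h2⟩
      rcases le_or_gt x M with h | h
      · have := hmono (le_of_lt haM) h h1
        linarith
      · have := hanti (le_of_lt h) (le_of_lt hbM) h2
        linarith
  have amono : ∀ y ∈ Ioo (0:ℝ) y₀, ∀ y' ∈ Ioo (0:ℝ) y₀, y < y' → a y < a y' := by
    intro y hy y' hy' hlt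
    have h1 : p (a y) < p (a y') := by
      rw [(haspec y hy).2, (haspec y' hy').2]; exact hlt
    exact (hmono.lt_iff_lt (le_of_lt (haspec y hy).1) (le_of_lt (haspec y' hy').1)).mp h1
  have sumanti : ∀ y ∈ Ioo (0:ℝ) y₀, ∀ y' ∈ Ioo (0:ℝ) y₀, y < y' →
      a y' + b y' < a y + b y := by
    intro y hy y' hy' hlt
    have h1 := haspec y hy
    have h2 := hbspec y hy
    have h3 := haspec y' hy'
    have h4 := hbspec y' hy'
    refine aux_sum_lt hp hmono hanti hskew h3.1 h4.1 h1.1 h2.1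
      (h3.2.trans h4.2.symm) (h1.2.trans h2.2.symm) ?_
    rw [h2.2, h4.2]; exact hlt
  -- transfer of integrals to density integrals
  have hmap : Measure.map X P = volume.withDensity (fun x => ENNReal.ofReal (p x)) := by
    refine Measure.ext fun s hs => ?_
    rw [Measure.map_apply hX hs, withDensity_apply _ hs,
      ← ofReal_integral_eq_lintegral_ofReal hpint.integrableOn
        (ae_of_all _ (fun x => hp0 x)),
      ← hdens s hs, ENNReal.ofReal_toReal (measure_ne_top P _)]
  have hnnm : Measurable (fun x => Real.toNNReal (p x)) := hpm.real_toNNReal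
  have hofr : (fun x => ENNReal.ofReal (p x)) =
      (fun x => ((Real.toNNReal (p x) : ℝ≥0) : ℝ≥0∞)) := funext fun x => rfl
  have htrans : ∀ f : ℝ → ℝ, Measurable f → Integrable (fun ω => f (X ω)) P →
      (∫ ω, f (X ω) ∂P) = (∫ x, f x * p x) ∧ Integrable (fun x => f x * p x) volume := by
    intro f hfm hfint
    have hmape : ∫ x, f x ∂(Measure.map X P) = ∫ ω, f (X ω) ∂P :=
      integral_map hX.aemeasurable hfm.aestronglyMeasurable
    constructor
    · rw [← hmape, hmap, hofr, integral_withDensity_eq_integral_smul hnnm]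
      congr 1
      funext x
      rw [NNReal.smul_def, Real.coe_toNNReal _ (hp0 x), smul_eq_mul, mul_comm]
    · have h1 : Integrable f (Measure.map X P) :=
        (integrable_map_measure hfm.aestronglyMeasurable hX.aemeasurable).mpr hfint
      rw [hmap, hofr, integrable_withDensity_iff_integrable_smul hnnm] at h1
      apply h1.congr
      filter_upwards with x
      rw [NNReal.smul_def, Real.coe_toNNReal _ (hp0 x), smul_eq_mul, mul_comm]
  -- integrability of the moments
  have hXint : Integrable X P := by
    refine (hX3.add (integrable_const 1)).mono hX.aestronglyMeasurable ?_
    filter_upwards with ω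
    have h0 : (0:ℝ) ≤ |X ω| := abs_nonneg _
    have hb' : |X ω| ≤ |X ω|^3 + 1 := by
      rcases le_or_gt (|X ω|) 1 with h | h
      · nlinarith [pow_nonneg h0 3]
      · nlinarith [mul_nonneg (mul_nonneg h0 (sub_nonneg.mpr (le_of_lt h)))
          (show (0:ℝ) ≤ |X ω| + 1 by linarith)]
    simp only [Real.norm_eq_abs]
    exact hb'.trans (le_abs_self _)
  set μ : ℝ := ∫ ω', X ω' ∂P with hμ
  have hmu3P : Integrable (fun ω => (X ω - μ)^3) P := by
    refine ((hX3.const_mul 4).add (integrable_const (4*|μ|^3))).mono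
      (((hX.sub measurable_const).pow_const 3).aestronglyMeasurable) ?_
    filter_upwards with ω
    have h0 : (0:ℝ) ≤ |X ω| := abs_nonneg _
    have h0' : (0:ℝ) ≤ |μ| := abs_nonneg _
    have h1 : |X ω - μ| ≤ |X ω| + |μ| := by
      calc |X ω - μ| = |X ω + -μ| := by rw [sub_eq_add_neg]
      _ ≤ |X ω| + |-μ| := abs_add_le _ _
      _ = |X ω| + |μ| := by rw [abs_neg]
    have h2 : |X ω - μ|^3 ≤ (|X ω| + |μ|)^3 := pow_le_pow_left₀ (abs_nonneg _) h1 3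
    simp only [Real.norm_eq_abs, abs_pow, Pi.add_apply]
    refine le_trans ?_ (le_abs_self _)
    nlinarith [mul_nonneg (sq_nonneg (|X ω| - |μ|)) (show (0:ℝ) ≤ |X ω| + |μ| by linarith)]
  have hmu1P : Integrable (fun ω => X ω - μ) P := hXint.sub (integrable_const μ)
  have z1 : ∫ ω, (X ω - μ) ∂P = 0 := by
    rw [integral_sub hXint (integrable_const μ), integral_const]
    simp [hμ]
  obtain ⟨e3, i3⟩ := htrans (fun x => (x - μ)^3)
    ((measurable_id.sub measurable_const).pow_const 3) hmu3P
  obtain ⟨e1, i1⟩ := htrans (fun x => x - μ)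
    (measurable_id.sub measurable_const) hmu1P
  obtain ⟨E3, I3⟩ := aux_layer hpm hp0 hbd hset (fun x => (x - μ)^3)
    ((measurable_id.sub measurable_const).pow_const 3) i3
  obtain ⟨E1, I1⟩ := aux_layer hpm hp0 hbd hset (fun x => x - μ)
    (measurable_id.sub measurable_const) i1
  have hG1zero : (∫ y in Ioo (0:ℝ) y₀, ∫ x in Ioo (a y) (b y), (x - μ)) = 0 := by
    rw [← E1, ← e1, z1]
  have f3 : ∀ y ∈ Ioo (0:ℝ) y₀, (∫ x in Ioo (a y) (b y), (x - μ)^3) =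
      ((b y - μ)^4 - (a y - μ)^4)/4 := by
    intro y hy
    rw [← integral_Ioc_eq_integral_Ioo,
      ← intervalIntegral.integral_of_le (le_of_lt (hab y hy)),
      intervalIntegral.integral_comp_sub_right (fun t => t^3) μ, integral_pow]
    norm_num
  have f1 : ∀ y ∈ Ioo (0:ℝ) y₀, (∫ x in Ioo (a y) (b y), (x - μ)) =
      ((b y - μ)^2 - (a y - μ)^2)/2 := by
    intro y hy
    rw [← integral_Ioc_eq_integral_Ioo,
      ← intervalIntegral.integral_of_le (le_of_lt (hab y hy)),
      intervalIntegral.integral_comp_sub_right (fun t => t) μ, integral_id]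
  have hfin := aux_final hy₀ hab amono sumanti f3 f1 I3 I1 hG1zero
  rw [← E3, ← e3] at hfin
  exact hfin
end

section
/- Let X be a real random variable with E|X| < ∞ satisfying: (1) X has a continuously differentiable density p; (2) there exists a mode M ∈ ℝ such that sign(p′(x)) = sign(M − x) for all x ∈ ℝ; and (3) whenever x₁ < M < x₂ and p(x₁) = p(x₂), one has p′(x₁) > −p′(x₂). Then E X > M, i.e., the mean strictly exceeds the mode. -/
open MeasureTheory Set
open scoped ENNReal NNReal


lemma mode_reflect (p : ℝ → ℝ) (hp : ContDiff ℝ 1 p) (M : ℝ)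
    (hmode : ∀ x : ℝ, Real.sign (deriv p x) = Real.sign (M - x))
    (hskew : ∀ x₁ x₂ : ℝ, x₁ < M → M < x₂ → p x₁ = p x₂ →
      -deriv p x₂ < deriv p x₁)
    (hpos : ∀ x, 0 < p x) (hpint : Integrable p volume)
    (hpone : (∫ x, p x) = 1) :
    ∀ t : ℝ, 0 < t → p (M - t) < p (M + t) := by
  have hpc : Continuous p := hp.continuous
  have hd : ∀ x, HasDerivAt p (deriv p x) x :=
    fun x => (hp.differentiable one_ne_zero x).hasDerivAt
  have hderivpos : ∀ x, x < M → 0 < deriv p x := by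
    intro x hx
    have h := hmode x
    rw [Real.sign_of_pos (by linarith : (0:ℝ) < M - x)] at h
    rcases lt_trichotomy (deriv p x) 0 with h1 | h1 | h1
    · rw [Real.sign_of_neg h1] at h; norm_num at h
    · rw [h1, Real.sign_zero] at h; norm_num at h
    · exact h1
  have hderivneg : ∀ x, M < x → deriv p x < 0 := by
    intro x hx
    have h := hmode x
    rw [Real.sign_of_neg (by linarith : M - x < 0)] at h
    rcases lt_trichotomy (deriv p x) 0 with h1 | h1 | h1
    · exact h1
    · rw [h1, Real.sign_zero] at h; norm_num at h
    · rw [Real.sign_of_pos h1] at h; norm_num at h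
  have hmono : StrictMonoOn p (Iic M) := by
    apply strictMonoOn_of_deriv_pos (convex_Iic M) (hpc.continuousOn)
    intro x hx
    rw [interior_Iic] at hx
    exact hderivpos x hx
  have hanti : StrictAntiOn p (Ici M) := by
    apply strictAntiOn_of_deriv_neg (convex_Ici M) (hpc.continuousOn)
    intro x hx
    rw [interior_Ici] at hx
    exact hderivneg x hx
  -- surjectivity of the right branch
  have exright : ∀ u ∈ Ioc 0 (p M), ∃ z, M ≤ z ∧ p z = u := by
    rintro u ⟨hu0, hu1⟩
    have hsmall : ∃ y, M ≤ y ∧ p y < u := by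
      by_contra h
      push_neg at h
      have hN : ∀ x ∈ Icc M (M + 2 / u), u ≤ p x := fun x hx => h x hx.1
      have hle : (∫ x in Icc M (M + 2 / u), (u:ℝ)) ≤ ∫ x in Icc M (M + 2 / u), p x := by
        apply setIntegral_mono_on (integrableOn_const ?_)
          hpint.integrableOn measurableSet_Icc hN
        rw [Real.volume_Icc]; exact ENNReal.ofReal_ne_top
      have hconst : (∫ x in Icc M (M + 2 / u), (u:ℝ)) = 2 := by
        rw [setIntegral_const, Real.volume_real_Icc_of_le (le_add_of_nonneg_right (by positivity))]
        have : M + 2 / u - M = 2 / u := by ring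
        rw [this, smul_eq_mul]
        field_simp
      have hbound : (∫ x in Icc M (M + 2 / u), p x) ≤ 1 := by
        rw [← hpone]
        exact setIntegral_le_integral hpint
          (Filter.Eventually.of_forall fun x => (hpos x).le)
      rw [hconst] at hle; linarith
    obtain ⟨y, hy1, hy2⟩ := hsmall
    have := intermediate_value_Icc' hy1 (hpc.continuousOn (s := Icc M y))
    obtain ⟨z, hz1, hz2⟩ := this ⟨hy2.le, hu1⟩
    exact ⟨z, hz1.1, hz2⟩
  choose! ρ hρ1 hρ2 using exright
  -- basic facts about ρ
  have hρgt : ∀ u ∈ Ioo 0 (p M), M < ρ u := by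
    rintro u ⟨h0, h1⟩
    rcases eq_or_lt_of_le (hρ1 u ⟨h0, h1.le⟩) with h | h
    · exfalso
      have := hρ2 u ⟨h0, h1.le⟩
      rw [← h] at this
      linarith
    · exact h
  -- continuity of ρ on the open interval
  have hρcont : ∀ u ∈ Ioo 0 (p M), ContinuousAt ρ u := by
    rintro u hu
    obtain ⟨h0, h1⟩ := hu
    set a := ρ u with ha
    have haM : M < a := hρgt u ⟨h0, h1⟩
    have hpa : p a = u := hρ2 u ⟨h0, h1.le⟩
    rw [Metric.continuousAt_iff]
    intro ε hε
    set ε₀ := min ε ((a - M) / 2) with hε₀def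
    have hε₀ : 0 < ε₀ := lt_min hε (by linarith)
    have haε : M < a - ε₀ := by
      have : ε₀ ≤ (a - M) / 2 := min_le_right _ _
      linarith
    have hlt1 : p a < p (a - ε₀) :=
      hanti (mem_Ici.mpr haε.le) (mem_Ici.mpr haM.le) (by linarith)
    have hlt2 : p (a + ε₀) < p a :=
      hanti (mem_Ici.mpr haM.le) (mem_Ici.mpr (by linarith)) (by linarith)
    have hltM : p (a - ε₀) < p M := hanti (mem_Ici.mpr le_rfl) (mem_Ici.mpr haε.le) haε
    refine ⟨min (u - p (a + ε₀)) (p (a - ε₀) - u), by rw [hpa] at *; exact lt_min (by linarith) (by linarith), ?_⟩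
    intro y hy
    rw [Real.dist_eq] at hy
    have hy1 : p (a + ε₀) < y := by
      have := abs_lt.mp hy
      have h2 := min_le_left (u - p (a + ε₀)) (p (a - ε₀) - u)
      linarith [this.1]
    have hy2 : y < p (a - ε₀) := by
      have := abs_lt.mp hy
      have h2 := min_le_right (u - p (a + ε₀)) (p (a - ε₀) - u)
      linarith [this.2]
    have hymem : y ∈ Ioc 0 (p M) :=
      ⟨lt_trans (hpos _) hy1, le_of_lt (lt_trans hy2 hltM)⟩
    set b := ρ y with hb
    have hbM : M ≤ b := hρ1 y hymem
    have hpb : p b = y := hρ2 y hymem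
    have hb1 : a - ε₀ < b := by
      by_contra h
      push_neg at h
      rcases eq_or_lt_of_le h with h' | h'
      · rw [h'] at hpb; linarith
      · have := hanti (mem_Ici.mpr hbM) (mem_Ici.mpr haε.le) h'
        linarith
    have hb2 : b < a + ε₀ := by
      by_contra h
      push_neg at h
      rcases eq_or_lt_of_le h with h' | h'
      · rw [← h'] at hpb; linarith
      · have := hanti (mem_Ici.mpr (by linarith : M ≤ a + ε₀)) (mem_Ici.mpr hbM) h'
        linarith
    rw [Real.dist_eq, abs_lt]
    constructor
    · have := min_le_left ε ((a - M) / 2); simp only [← ha]; linarith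
    · have := min_le_left ε ((a - M) / 2); simp only [← ha]; linarith
  -- derivative of ρ
  have hρderiv : ∀ u ∈ Ioo 0 (p M), HasDerivAt ρ (deriv p (ρ u))⁻¹ u := by
    rintro u hu
    refine HasDerivAt.of_local_left_inverse (hρcont u hu) (hd (ρ u)) ?_ ?_
    · exact ne_of_lt (hderivneg _ (hρgt u hu))
    · filter_upwards [isOpen_Ioo.mem_nhds hu] with y hy
      exact hρ2 y ⟨hy.1, hy.2.le⟩
  -- the matching function φ
  set φ : ℝ → ℝ := fun x => ρ (p x) with hφdef
  have hmem : ∀ x, x < M → p x ∈ Ioo 0 (p M) := by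
    intro x hx
    exact ⟨hpos x, hmono (mem_Iic.mpr hx.le) (mem_Iic.mpr le_rfl) hx⟩
  have hφval : ∀ x, x < M → p (φ x) = p x := fun x hx => hρ2 _ (Ioo_subset_Ioc_self (hmem x hx))
  have hφgt : ∀ x, x < M → M < φ x := fun x hx => hρgt _ (hmem x hx)
  have hφderiv : ∀ x, x < M →
      HasDerivAt φ ((deriv p (φ x))⁻¹ * deriv p x) x := by
    intro x hx
    exact (hρderiv (p x) (hmem x hx)).comp x (hd x)
  have hFderiv : ∀ x, x < M →
      HasDerivAt (fun y => φ y + y) ((deriv p (φ x))⁻¹ * deriv p x + 1) x := by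
    intro x hx
    exact (hφderiv x hx).add (hasDerivAt_id' x)
  have hslope : ∀ x, x < M → (deriv p (φ x))⁻¹ * deriv p x + 1 < 0 := by
    intro x hx
    have h2 : deriv p (φ x) < 0 := hderivneg _ (hφgt x hx)
    have hsk : -deriv p (φ x) < deriv p x :=
      hskew x (φ x) hx (hφgt x hx) (hφval x hx).symm
    have : deriv p x / deriv p (φ x) < -1 := by
      rw [div_lt_iff_of_neg h2]
      linarith
    rw [mul_comm, ← div_eq_mul_inv]
    linarith
  have hFanti : StrictAntiOn (fun y => φ y + y) (Iio M) := by
    apply strictAntiOn_of_deriv_neg (convex_Iio M)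
    · intro x hx
      exact ((hFderiv x hx).differentiableAt.continuousAt).continuousWithinAt
    · intro x hx
      rw [interior_Iio] at hx
      rw [(hFderiv x hx).deriv]
      exact hslope x hx
  have hFge : ∀ x, x < M → 2 * M ≤ φ x + x := by
    intro x hx
    by_contra h
    push_neg at h
    set y := (max x (φ x + x - M) + M) / 2 with hy
    have hmax : max x (φ x + x - M) < M := max_lt hx (by linarith)
    have hy1 : max x (φ x + x - M) < y := by rw [hy]; linarith
    have hy2 : y < M := by rw [hy]; linarith
    have hxy : x < y := lt_of_le_of_lt (le_max_left _ _) hy1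
    have hF : φ y + y < φ x + x := hFanti (mem_Iio.2 hx) (mem_Iio.2 hy2) hxy
    have hφy : M < φ y := hφgt y hy2
    have : φ x + x - M < y := lt_of_le_of_lt (le_max_right _ _) hy1
    linarith
  have hFgt : ∀ x, x < M → 2 * M < φ x + x := by
    intro x hx
    have hmid : x < (x + M) / 2 := by linarith
    have hmid2 : (x + M) / 2 < M := by linarith
    have h1 : φ ((x + M) / 2) + (x + M) / 2 < φ x + x :=
      hFanti (mem_Iio.2 hx) (mem_Iio.2 hmid2) hmid
    have h2 := hFge ((x + M) / 2) hmid2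
    linarith
  -- conclusion
  intro t ht
  have hx : M - t < M := by linarith
  have h1 : M + t < φ (M - t) := by
    have := hFgt (M - t) hx
    linarith
  have h2 : p (φ (M - t)) < p (M + t) :=
    hanti (mem_Ici.mpr (by linarith : M ≤ M + t)) (mem_Ici.mpr (by linarith : M ≤ φ (M - t))) h1
  rw [hφval (M - t) hx] at h2
  exact h2


open ProbabilityTheory Real in
/-- If an integrable real random variable `X` has a continuously differentiable
density `p` which is unimodal with mode `M` (`sign p′(x) = sign (M − x)`) and
such that `p(x₁) = p(x₂)` with `x₁ < M < x₂` implies `p′(x₁) > −p′(x₂)`, then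
the mean of `X` strictly exceeds the mode: `E X > M`. -/
theorem stmt_14 {Ω : Type*} [MeasurableSpace Ω] (P : Measure Ω) [IsProbabilityMeasure P]
    (X : Ω → ℝ) (hX : Measurable X) (hXint : Integrable X P) (p : ℝ → ℝ)
    (hdens : ∀ s : Set ℝ, MeasurableSet s → (P (X ⁻¹' s)).toReal = ∫ x in s, p x)
    (hp : ContDiff ℝ 1 p)
    (M : ℝ)
    (hmode : ∀ x : ℝ, Real.sign (deriv p x) = Real.sign (M - x))
    (hskew : ∀ x₁ x₂ : ℝ, x₁ < M → M < x₂ → p x₁ = p x₂ →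
      -deriv p x₂ < deriv p x₁) :
    M < ∫ ω, X ω ∂P := by
  have hpc : Continuous p := hp.continuous
  -- nonnegativity of the density
  have hp0 : ∀ x, 0 ≤ p x := by
    intro x0
    by_contra h
    push_neg at h
    obtain ⟨δ, hδ, hball⟩ := Metric.continuousAt_iff.mp hpc.continuousAt (-p x0 / 2) (by linarith)
    have hlt : ∀ y ∈ Ioo (x0 - δ) (x0 + δ), p y ≤ p x0 / 2 := by
      intro y hy
      have : dist y x0 < δ := by
        rw [Real.dist_eq, abs_lt]; constructor <;> [linarith [hy.1]; linarith [hy.2]]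
      have := hball this
      rw [Real.dist_eq, abs_lt] at this
      linarith [this.2]
    have hint : IntegrableOn p (Ioo (x0 - δ) (x0 + δ)) volume :=
      (hpc.integrableOn_Icc).mono_set Ioo_subset_Icc_self
    have hle : (∫ x in Ioo (x0 - δ) (x0 + δ), p x) ≤ ∫ x in Ioo (x0 - δ) (x0 + δ), p x0 / 2 := by
      apply setIntegral_mono_on hint (integrableOn_const ?_) measurableSet_Ioo hlt
      rw [Real.volume_Ioo]; exact ENNReal.ofReal_ne_top
    have hconstval : (∫ x in Ioo (x0 - δ) (x0 + δ), p x0 / 2) = (2 * δ) * (p x0 / 2) := by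
      rw [setIntegral_const, Real.volume_real_Ioo_of_le (by linarith)]
      rw [smul_eq_mul]
      ring
    have h0 : (0:ℝ) ≤ ∫ x in Ioo (x0 - δ) (x0 + δ), p x := by
      rw [← hdens _ measurableSet_Ioo]; exact ENNReal.toReal_nonneg
    rw [hconstval] at hle
    nlinarith
  -- strict positivity of the density
  have hderivpos : ∀ x, x < M → 0 < deriv p x := by
    intro x hx
    have h := hmode x
    rw [Real.sign_of_pos (by linarith : (0:ℝ) < M - x)] at h
    rcases lt_trichotomy (deriv p x) 0 with h1 | h1 | h1
    · rw [Real.sign_of_neg h1] at h; norm_num at h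
    · rw [h1, Real.sign_zero] at h; norm_num at h
    · exact h1
  have hderivneg : ∀ x, M < x → deriv p x < 0 := by
    intro x hx
    have h := hmode x
    rw [Real.sign_of_neg (by linarith : M - x < 0)] at h
    rcases lt_trichotomy (deriv p x) 0 with h1 | h1 | h1
    · exact h1
    · rw [h1, Real.sign_zero] at h; norm_num at h
    · rw [Real.sign_of_pos h1] at h; norm_num at h
  have hmono : StrictMonoOn p (Iic M) := by
    apply strictMonoOn_of_deriv_pos (convex_Iic M) (hpc.continuousOn)
    intro x hx
    rw [interior_Iic] at hx
    exact hderivpos x hx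
  have hanti : StrictAntiOn p (Ici M) := by
    apply strictAntiOn_of_deriv_neg (convex_Ici M) (hpc.continuousOn)
    intro x hx
    rw [interior_Ici] at hx
    exact hderivneg x hx
  have hppos : ∀ x, 0 < p x := by
    intro x
    rcases lt_trichotomy (p x) 0 with h | h | h
    · exact absurd h (not_lt.mpr (hp0 x))
    · exfalso
      rcases le_or_gt x M with hxM | hxM
      · have : p (x - 1) < p x :=
          hmono (mem_Iic.mpr (by linarith)) (mem_Iic.mpr hxM) (by linarith)
        have := hp0 (x - 1)
        linarith
      · have : p (x + 1) < p x :=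
          hanti (mem_Ici.mpr hxM.le) (mem_Ici.mpr (by linarith)) (by linarith)
        have := hp0 (x + 1)
        linarith
    · exact h
  have hpc : Continuous p := hp.continuous
  -- integrability of p
  have hIccInt : ∀ a b : ℝ, IntegrableOn p (Icc a b) volume := fun a b => hpc.integrableOn_Icc
  have hlin : ∀ a b : ℝ, (∫⁻ x in Icc a b, ENNReal.ofReal (p x)) = ENNReal.ofReal (∫ x in Icc a b, p x) := by
    intro a b
    rw [← ofReal_integral_eq_lintegral_ofReal (hIccInt a b)
      (Filter.Eventually.of_forall fun x => hp0 x)]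
  have hIccle : ∀ a b : ℝ, (∫⁻ x in Icc a b, ENNReal.ofReal (p x)) ≤ 1 := by
    intro a b
    rw [hlin a b, ← hdens _ measurableSet_Icc]
    calc ENNReal.ofReal (P (X ⁻¹' Icc a b)).toReal ≤ ENNReal.ofReal (P univ).toReal := by
          apply ENNReal.ofReal_le_ofReal
          exact ENNReal.toReal_mono (measure_ne_top _ _) (measure_mono (subset_univ _))
      _ = 1 := by simp
  have hlintotal : (∫⁻ x, ENNReal.ofReal (p x)) ≤ 1 := by
    set μ' := volume.withDensity fun x => ENNReal.ofReal (p x) with hμ'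
    have hmon : Monotone fun n : ℕ => Icc (-(n:ℝ)) n := by
      intro m n hmn
      exact Icc_subset_Icc (by exact_mod_cast neg_le_neg (Nat.cast_le.mpr hmn)) (by exact_mod_cast Nat.cast_le.mpr hmn)
    have hun : (⋃ n : ℕ, Icc (-(n:ℝ)) n) = univ := by
      apply eq_univ_of_forall
      intro x
      obtain ⟨n, hn⟩ := exists_nat_ge |x|
      exact mem_iUnion.mpr ⟨n, abs_le.mp hn |>.1, abs_le.mp hn |>.2⟩
    have h1 : (∫⁻ x, ENNReal.ofReal (p x)) = μ' univ := by
      rw [hμ', withDensity_apply _ MeasurableSet.univ, Measure.restrict_univ]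
    rw [h1, ← hun, (hmon.directed_le).measure_iUnion]
    apply iSup_le
    intro n
    rw [hμ', withDensity_apply _ measurableSet_Icc]
    exact hIccle _ _
  have hpint : Integrable p volume := by
    refine ⟨hpc.aestronglyMeasurable, ?_⟩
    rw [HasFiniteIntegral]
    calc (∫⁻ x, ‖p x‖₊) = ∫⁻ x, ENNReal.ofReal (p x) := by
          congr 1; funext x; exact Real.enorm_eq_ofReal (hp0 x)
      _ ≤ 1 := hlintotal
      _ < ⊤ := ENNReal.one_lt_top
  -- total mass 1
  have hpone : (∫ x, p x) = 1 := by
    have := hdens univ MeasurableSet.univ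
    rw [preimage_univ, measure_univ, ENNReal.toReal_one, setIntegral_univ] at this
    exact this.symm
  -- map measure equals withDensity
  have hmap : Measure.map X P = volume.withDensity fun x => ENNReal.ofReal (p x) := by
    apply Measure.ext
    intro s hs
    rw [Measure.map_apply hX hs, withDensity_apply _ hs]
    have hfin1 : P (X ⁻¹' s) ≠ ⊤ := measure_ne_top _ _
    have hfin2 : (∫⁻ x in s, ENNReal.ofReal (p x)) ≠ ⊤ := by
      refine ne_of_lt (lt_of_le_of_lt ?_ (lt_of_le_of_lt hlintotal ENNReal.one_lt_top))
      exact setLIntegral_le_lintegral _ _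
    have heq2 : (∫⁻ x in s, ENNReal.ofReal (p x)) = ENNReal.ofReal (∫ x in s, p x) := by
      rw [← ofReal_integral_eq_lintegral_ofReal (hpint.integrableOn)
        (Filter.Eventually.of_forall fun x => hp0 x)]
    rw [← ENNReal.toReal_eq_toReal_iff' hfin1 hfin2, hdens s hs, heq2,
      ENNReal.toReal_ofReal (setIntegral_nonneg hs fun x _ => hp0 x)]
  -- expectation formula
  have f_meas : Measurable fun x : ℝ => (p x).toNNReal := hpc.measurable.real_toNNReal
  have hwd : (fun x : ℝ => ENNReal.ofReal (p x)) = fun x => ((p x).toNNReal : ℝ≥0∞) := rfl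
  have hEX : (∫ ω, X ω ∂P) = ∫ x, p x * x := by
    have h := integral_map (μ := P) hX.aemeasurable
      (aestronglyMeasurable_id : AEStronglyMeasurable (fun y : ℝ => y) (Measure.map X P))
    simp only [id_eq] at h
    rw [← h, hmap, hwd, integral_withDensity_eq_integral_smul f_meas]
    congr 1
    funext x
    rw [NNReal.smul_def, Real.coe_toNNReal _ (hp0 x), smul_eq_mul]
  have hxpint : Integrable (fun x => p x * x) volume := by
    have h1 : Integrable (fun y : ℝ => y) (Measure.map X P) :=
      (integrable_map_measure aestronglyMeasurable_id hX.aemeasurable).mpr hXint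
    rw [hmap, hwd] at h1
    have h2 := (integrable_withDensity_iff_integrable_smul f_meas).mp h1
    have : (fun x => ((p x).toNNReal : ℝ≥0) • x) = fun x => p x * x := by
      funext x
      rw [NNReal.smul_def, Real.coe_toNNReal _ (hp0 x), smul_eq_mul]
    rwa [this] at h2
  -- the key pointwise inequality
  have hkey := mode_reflect p hp M hmode hskew hppos hpint hpone
  -- the reflected integrand
  set q : ℝ → ℝ := fun x => (x - M) * p x with hq
  have hq_int : Integrable q volume := by
    have : q = fun x => p x * x - M * p x := by funext x; rw [hq]; ring
    rw [this]; exact hxpint.sub (hpint.const_mul M)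
  have hq_val : (∫ x, q x) = (∫ x, p x * x) - M := by
    have h1 : (∫ x, q x) = ∫ x, (p x * x - M * p x) := by
      congr 1; funext x; rw [hq]; ring
    rw [h1, integral_sub hxpint (hpint.const_mul M), integral_const_mul, hpone, mul_one]
  have hq2_int : Integrable (fun x => q (2 * M - x)) volume := hq_int.comp_sub_left (2 * M)
  have hrefl : (∫ x, q (2 * M - x)) = ∫ x, q x := integral_sub_left_eq_self q volume (2 * M)
  have hg_int : Integrable (fun x => q x + q (2 * M - x)) volume := hq_int.add hq2_int
  have hg_pos : ∀ x, M < x → 0 < q x + q (2 * M - x) := by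
    intro x hx
    have hk := hkey (x - M) (by linarith)
    rw [show M - (x - M) = 2 * M - x by ring, show M + (x - M) = x by ring] at hk
    have : q x + q (2 * M - x) = (x - M) * (p x - p (2 * M - x)) := by
      rw [hq]; ring
    rw [this]
    have h1 : 0 < x - M := by linarith
    nlinarith
  have hg_nonneg : ∀ x, 0 ≤ q x + q (2 * M - x) := by
    intro x
    rcases lt_trichotomy x M with h | h | h
    · have hk := hkey (M - x) (by linarith)
      rw [show M - (M - x) = x by ring, show M + (M - x) = 2 * M - x by ring] at hk
      have : q x + q (2 * M - x) = (x - M) * (p x - p (2 * M - x)) := by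
        rw [hq]; ring
      rw [this]
      nlinarith
    · subst h
      have hx2 : (2:ℝ) * x - x = x := by ring
      rw [hx2]
      simp only [hq, sub_self, zero_mul, add_zero]
      exact le_rfl
    · exact (hg_pos x h).le
  have hgint_pos : 0 < ∫ x, q x + q (2 * M - x) := by
    rw [integral_pos_iff_support_of_nonneg hg_nonneg hg_int]
    have hsub : Ioi M ⊆ Function.support fun x => q x + q (2 * M - x) :=
      fun x hx => ne_of_gt (hg_pos x hx)
    calc (0:ℝ≥0∞) < volume (Ioi M) := by rw [Real.volume_Ioi]; exact ENNReal.zero_lt_top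
      _ ≤ volume (Function.support fun x => q x + q (2 * M - x)) := measure_mono hsub
  have h2q : (∫ x, q x + q (2 * M - x)) = 2 * ∫ x, q x := by
    rw [integral_add hq_int hq2_int, hrefl]; ring
  rw [h2q] at hgint_pos
  rw [hEX]
  linarith [hq_val, hgint_pos]
end

section
/- Fix x > 0 and σ² > 0, let F(y) = ln(e^y/(e^y + 1)²) − (y − x)²/(2σ²), and let y₀ be the unique zero of F′. Suppose y₃ < y₄ are real numbers with F′(y₃) + F′(y₄) = 0. Then: (1) y₃ < y₀ < y₄ and F′(y₃) = −F′(y₄) > 0; (2) y₃ + y₄ > 0; (3) F″(y₃) < F″(y₄) < 0; and (4) F(y₃) > F(y₄). -/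
open Real

namespace Stmt16Aux

noncomputable def D (x vsq : ℝ) (y : ℝ) : ℝ :=
  1 - 2 * (Real.exp y / (Real.exp y + 1)) - (y - x) / vsq

noncomputable def D2 (vsq : ℝ) (y : ℝ) : ℝ :=
  -2 * (Real.exp y / (Real.exp y + 1) ^ 2) - 1 / vsq

noncomputable def Fe (x vsq : ℝ) (y : ℝ) : ℝ :=
  y - 2 * Real.log (Real.exp y + 1) - (y - x) ^ 2 / (2 * vsq)

lemma hasDerivAt_Fe (x vsq : ℝ) (hv : vsq ≠ 0) (y : ℝ) :
    HasDerivAt (Fe x vsq) (D x vsq y) y := by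
  have h1 : HasDerivAt (fun y => Real.log (Real.exp y + 1))
      (Real.exp y / (Real.exp y + 1)) y := by
    have := ((Real.hasDerivAt_exp y).add_const 1).log (by positivity)
    simpa using this
  have h3 : HasDerivAt (fun y : ℝ => (y - x) ^ 2) (2 * (y - x)) y := by
    simpa using ((hasDerivAt_id y).sub_const x).fun_pow 2
  have h2 : HasDerivAt (fun y : ℝ => (y - x) ^ 2 / (2 * vsq))
      ((y - x) / vsq) y := by
    have := h3.div_const (2 * vsq)
    refine this.congr_deriv ?_
    field_simp
  exact ((hasDerivAt_id y).sub (h1.const_mul 2)).sub h2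

lemma hasDerivAt_D (x vsq : ℝ) (y : ℝ) :
    HasDerivAt (D x vsq) (D2 vsq y) y := by
  have h1 : HasDerivAt (fun y => Real.exp y / (Real.exp y + 1))
      (Real.exp y / (Real.exp y + 1) ^ 2) y := by
    have := (Real.hasDerivAt_exp y).div ((Real.hasDerivAt_exp y).add_const 1)
      (by positivity)
    refine this.congr_deriv ?_
    field_simp
    ring
  have h2 : HasDerivAt (fun y : ℝ => (y - x) / vsq) (1 / vsq) y := by
    have := ((hasDerivAt_id y).sub_const x).div_const vsq
    simpa [one_div] using this
  have := ((hasDerivAt_const y (1:ℝ)).sub (h1.const_mul 2)).sub h2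
  refine this.congr_deriv ?_
  unfold D2
  ring

lemma diff_D (x vsq : ℝ) : Differentiable ℝ (D x vsq) :=
  fun y => (hasDerivAt_D x vsq y).differentiableAt

lemma D2_neg (vsq : ℝ) (hv : 0 < vsq) (y : ℝ) : D2 vsq y < 0 := by
  unfold D2
  have h1 : 0 < Real.exp y / (Real.exp y + 1) ^ 2 := by positivity
  have h2 : 0 < 1 / vsq := by positivity
  linarith

lemma strictAnti_D' (x vsq : ℝ) (hv : 0 < vsq) : StrictAnti (D x vsq) := by
  have : ∀ y, deriv (D x vsq) y < 0 := fun y => by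
    rw [(hasDerivAt_D x vsq y).deriv]; exact D2_neg vsq hv y
  exact strictAnti_of_deriv_neg this

lemma h_lt (a b : ℝ) (hab : a < b) (hs : 0 < a + b) :
    Real.exp b / (Real.exp b + 1) ^ 2 < Real.exp a / (Real.exp a + 1) ^ 2 := by
  have hu : 0 < Real.exp a := Real.exp_pos a
  have hw : 0 < Real.exp b := Real.exp_pos b
  have huv : 1 < Real.exp a * Real.exp b := by
    rw [← Real.exp_add]
    have : Real.exp 0 < Real.exp (a + b) := Real.exp_lt_exp.mpr hs
    simpa using this
  have hlt : Real.exp a < Real.exp b := Real.exp_lt_exp.mpr hab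
  rw [div_lt_div_iff₀ (by positivity) (by positivity)]
  nlinarith

lemma sum_pos (x vsq y₃ y₄ : ℝ) (hx : 0 < x) (hv : 0 < vsq)
    (hsum : D x vsq y₃ + D x vsq y₄ = 0) : 0 < y₃ + y₄ := by
  by_contra h
  push_neg at h
  have hu : 0 < Real.exp y₃ := Real.exp_pos y₃
  have hw : 0 < Real.exp y₄ := Real.exp_pos y₄
  have huv : Real.exp y₃ * Real.exp y₄ ≤ 1 := by
    rw [← Real.exp_add]
    exact Real.exp_le_one_iff.mpr h
  have key : D x vsq y₃ + D x vsq y₄ =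
      (2 - 2 * (Real.exp y₃ * Real.exp y₄)) /
        ((Real.exp y₃ + 1) * (Real.exp y₄ + 1))
      + (2 * x - (y₃ + y₄)) / vsq := by
    unfold D
    field_simp
    ring
  have e1 : (0:ℝ) ≤ (2 - 2 * (Real.exp y₃ * Real.exp y₄)) /
      ((Real.exp y₃ + 1) * (Real.exp y₄ + 1)) :=
    div_nonneg (by linarith) (by positivity)
  have e2 : (0:ℝ) < (2 * x - (y₃ + y₄)) / vsq :=
    div_pos (by linarith) hv
  linarith

end Stmt16Aux

/-- For fixed `x > 0`, `σ² > 0`,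
`F(y) = ln (e^y / (e^y + 1)²) − (y − x)²/(2σ²)`, `y₀` the (unique) zero of `F′`,
and `y₃ < y₄` with `F′(y₃) + F′(y₄) = 0`:
(1) `y₃ < y₀ < y₄` and `F′(y₃) = −F′(y₄) > 0`; (2) `y₃ + y₄ > 0`;
(3) `F″(y₃) < F″(y₄) < 0`; (4) `F(y₃) > F(y₄)`. -/
theorem stmt_16 (x vsq : ℝ) (hx : 0 < x) (hv : 0 < vsq)
    (F : ℝ → ℝ)
    (hF : ∀ y : ℝ, F y
      = Real.log (Real.exp y / (Real.exp y + 1) ^ 2) - (y - x) ^ 2 / (2 * vsq))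
    (y₀ : ℝ) (hy₀ : deriv F y₀ = 0)
    (y₃ y₄ : ℝ) (h34 : y₃ < y₄) (hsum : deriv F y₃ + deriv F y₄ = 0) :
    (y₃ < y₀ ∧ y₀ < y₄ ∧ deriv F y₃ = -deriv F y₄ ∧ 0 < deriv F y₃) ∧
    0 < y₃ + y₄ ∧
    (deriv (deriv F) y₃ < deriv (deriv F) y₄ ∧ deriv (deriv F) y₄ < 0) ∧
    F y₄ < F y₃ := by
  classical
  have hvne : vsq ≠ 0 := ne_of_gt hv
  have hFeq : F = Stmt16Aux.Fe x vsq := by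
    funext y
    rw [hF]
    unfold Stmt16Aux.Fe
    rw [Real.log_div (Real.exp_ne_zero y) (by positivity), Real.log_exp,
      Real.log_pow]
    push_cast
    ring
  have hderiv : deriv F = Stmt16Aux.D x vsq := by
    funext y
    rw [hFeq]
    exact (Stmt16Aux.hasDerivAt_Fe x vsq hvne y).deriv
  have hderiv2 : deriv (deriv F) = Stmt16Aux.D2 vsq := by
    rw [hderiv]
    funext y
    exact (Stmt16Aux.hasDerivAt_D x vsq y).deriv
  rw [hderiv2]
  rw [hderiv] at hy₀ hsum ⊢
  rw [hFeq]
  have hanti := Stmt16Aux.strictAnti_D' x vsq hv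
  have hD34 : Stmt16Aux.D x vsq y₄ < Stmt16Aux.D x vsq y₃ := hanti h34
  have hD3pos : 0 < Stmt16Aux.D x vsq y₃ := by linarith
  have hD4neg : Stmt16Aux.D x vsq y₄ < 0 := by linarith
  have h30 : y₃ < y₀ := hanti.lt_iff_gt.mp (by rw [hy₀]; exact hD3pos)
  have h04 : y₀ < y₄ := hanti.lt_iff_gt.mp (by rw [hy₀]; exact hD4neg)
  have hspos : 0 < y₃ + y₄ := Stmt16Aux.sum_pos x vsq y₃ y₄ hx hv hsum
  have hD2lt : Stmt16Aux.D2 vsq y₃ < Stmt16Aux.D2 vsq y₄ := by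
    have := Stmt16Aux.h_lt y₃ y₄ h34 hspos
    unfold Stmt16Aux.D2
    linarith
  -- part 4
  have hmain : Stmt16Aux.Fe x vsq y₄ < Stmt16Aux.Fe x vsq y₃ := by
    set s := y₃ + y₄ with hs
    set m := s / 2 with hm
    have hm3 : y₃ < m := by rw [hm, hs]; linarith
    have hm4 : m < y₄ := by rw [hm, hs]; linarith
    set φ : ℝ → ℝ := fun t => Stmt16Aux.D x vsq t + Stmt16Aux.D x vsq (s - t)
      with hφdef
    have hφd : ∀ t, HasDerivAt φ
        (Stmt16Aux.D2 vsq t - Stmt16Aux.D2 vsq (s - t)) t := by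
      intro t
      have h1 := Stmt16Aux.hasDerivAt_D x vsq t
      have hinner : HasDerivAt (fun t : ℝ => s - t) (-1) t := by
        simpa using (hasDerivAt_id t).const_sub s
      have h2 : HasDerivAt (fun t => Stmt16Aux.D x vsq (s - t))
          (-(Stmt16Aux.D2 vsq (s - t))) t := by
        have := (Stmt16Aux.hasDerivAt_D x vsq (s - t)).comp t hinner
        simpa [Function.comp_def] using this
      have := h1.add h2
      exact this.congr_deriv (by ring)
    have hDcont : Continuous (Stmt16Aux.D x vsq) :=
      (Stmt16Aux.diff_D x vsq).continuous
    have hφcont : Continuous φ :=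
      hDcont.add (hDcont.comp (continuous_const.sub continuous_id))
    have hφanti : StrictAntiOn φ (Set.Icc y₃ m) := by
      apply strictAntiOn_of_deriv_neg (convex_Icc _ _) hφcont.continuousOn
      intro t ht
      rw [interior_Icc] at ht
      rw [(hφd t).deriv]
      have hts : t < s - t := by
        have := ht.2
        rw [hm] at this
        linarith
      have hsum' : 0 < t + (s - t) := by
        have : t + (s - t) = s := by ring
        rw [this]; rw [hs]; exact hspos
      have := Stmt16Aux.h_lt t (s - t) hts hsum'
      unfold Stmt16Aux.D2
      linarith
    have hφ3 : φ y₃ = 0 := by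
      have : s - y₃ = y₄ := by rw [hs]; ring
      rw [hφdef]
      simp only [this]
      exact hsum
    have hφneg : ∀ t ∈ Set.Ioc y₃ m, φ t < 0 := by
      intro t ht
      have := hφanti ⟨le_refl y₃, hm3.le⟩ ⟨ht.1.le, ht.2⟩ ht.1
      linarith [hφ3]
    set H : ℝ → ℝ := fun t => Stmt16Aux.Fe x vsq (s - t) - Stmt16Aux.Fe x vsq t
      with hHdef
    have hHd : ∀ t, HasDerivAt H
        (-(Stmt16Aux.D x vsq (s - t)) - Stmt16Aux.D x vsq t) t := by
      intro t
      have hinner : HasDerivAt (fun t : ℝ => s - t) (-1) t := by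
        simpa using (hasDerivAt_id t).const_sub s
      have h2 : HasDerivAt (fun t => Stmt16Aux.Fe x vsq (s - t))
          (-(Stmt16Aux.D x vsq (s - t))) t := by
        have := (Stmt16Aux.hasDerivAt_Fe x vsq hvne (s - t)).comp t hinner
        simpa [Function.comp_def] using this
      exact h2.sub (Stmt16Aux.hasDerivAt_Fe x vsq hvne t)
    have hHcont : Continuous H := by
      have hFediff : Differentiable ℝ (Stmt16Aux.Fe x vsq) :=
        fun y => (Stmt16Aux.hasDerivAt_Fe x vsq hvne y).differentiableAt
      have hFecont : Continuous (Stmt16Aux.Fe x vsq) := hFediff.continuous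
      exact (hFecont.comp (continuous_const.sub continuous_id)).sub hFecont
    have hHmono : StrictMonoOn H (Set.Icc y₃ m) := by
      apply strictMonoOn_of_deriv_pos (convex_Icc _ _) hHcont.continuousOn
      intro t ht
      rw [interior_Icc] at ht
      rw [(hHd t).deriv]
      have := hφneg t ⟨ht.1, ht.2.le⟩
      rw [hφdef] at this
      simp only at this
      linarith
    have hlt := hHmono ⟨le_refl y₃, hm3.le⟩ ⟨hm3.le, le_refl m⟩ hm3
    have hHm : H m = 0 := by
      have : s - m = m := by rw [hm]; ring
      rw [hHdef]
      simp only [this, sub_self]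
    have hHy3 : H y₃ = Stmt16Aux.Fe x vsq y₄ - Stmt16Aux.Fe x vsq y₃ := by
      have : s - y₃ = y₄ := by rw [hs]; ring
      rw [hHdef]
      simp only [this]
    rw [hHy3, hHm] at hlt
    linarith
  refine ⟨⟨h30, h04, by linarith, hD3pos⟩, hspos, ⟨hD2lt, Stmt16Aux.D2_neg vsq hv y₄⟩, hmain⟩
end

section
/- Let f(x) = eˣ/(1 + eˣ)² be the standard logistic probability density. Then for every x ∈ ℝ, f‴(x) f(x)² − 3 f″(x) f′(x) f(x) + 2 f′(x)³ = 2 e^{4x}(eˣ − 1)/(1 + eˣ)⁹; in particular, the sign of f‴(x) f(x)² − 3 f″(x) f′(x) f(x) + 2 f′(x)³ equals sign(x). -/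
open Real

lemma den_ne (x : ℝ) : (1 + Real.exp x) ≠ 0 := by positivity

lemma hd1 (x : ℝ) : HasDerivAt (fun y : ℝ => Real.exp y / (1 + Real.exp y) ^ 2)
    (Real.exp x * (1 - Real.exp x) / (1 + Real.exp x) ^ 3) x := by
  have h := (Real.hasDerivAt_exp x).div (((hasDerivAt_const x (1:ℝ)).add (Real.hasDerivAt_exp x)).pow 2) (pow_ne_zero _ (den_ne x))
  refine h.congr_deriv ?_
  have := den_ne x
  simp only [Pi.add_apply, Pi.pow_apply, Pi.mul_apply, Pi.sub_apply]
  field_simp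
  ring

lemma hd2 (x : ℝ) : HasDerivAt (fun y : ℝ => Real.exp y * (1 - Real.exp y) / (1 + Real.exp y) ^ 3)
    (Real.exp x * (1 - 4 * Real.exp x + Real.exp x ^ 2) / (1 + Real.exp x) ^ 4) x := by
  have h := ((Real.hasDerivAt_exp x).mul ((hasDerivAt_const x (1:ℝ)).sub (Real.hasDerivAt_exp x))).div
      (((hasDerivAt_const x (1:ℝ)).add (Real.hasDerivAt_exp x)).pow 3) (pow_ne_zero _ (den_ne x))
  refine h.congr_deriv ?_
  have := den_ne x
  simp only [Pi.add_apply, Pi.pow_apply, Pi.mul_apply, Pi.sub_apply]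
  field_simp
  ring

lemma hd3 (x : ℝ) : HasDerivAt (fun y : ℝ => Real.exp y * (1 - 4 * Real.exp y + Real.exp y ^ 2) / (1 + Real.exp y) ^ 4)
    (Real.exp x * (1 - Real.exp x) * (1 - 10 * Real.exp x + Real.exp x ^ 2) / (1 + Real.exp x) ^ 5) x := by
  have h := ((Real.hasDerivAt_exp x).mul (((hasDerivAt_const x (1:ℝ)).sub ((hasDerivAt_const x (4:ℝ)).mul (Real.hasDerivAt_exp x))).add ((Real.hasDerivAt_exp x).pow 2))).div
      (((hasDerivAt_const x (1:ℝ)).add (Real.hasDerivAt_exp x)).pow 4) (pow_ne_zero _ (den_ne x))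
  refine h.congr_deriv ?_
  have := den_ne x
  simp only [Pi.add_apply, Pi.pow_apply, Pi.mul_apply, Pi.sub_apply]
  field_simp
  ring

lemma it1 : iteratedDeriv 1 (fun y : ℝ => Real.exp y / (1 + Real.exp y) ^ 2)
    = fun x => Real.exp x * (1 - Real.exp x) / (1 + Real.exp x) ^ 3 := by
  rw [iteratedDeriv_one]
  funext x; exact (hd1 x).deriv

lemma it2 : iteratedDeriv 2 (fun y : ℝ => Real.exp y / (1 + Real.exp y) ^ 2)
    = fun x => Real.exp x * (1 - 4 * Real.exp x + Real.exp x ^ 2) / (1 + Real.exp x) ^ 4 := by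
  rw [iteratedDeriv_succ, it1]
  funext x; exact (hd2 x).deriv

lemma it3 : iteratedDeriv 3 (fun y : ℝ => Real.exp y / (1 + Real.exp y) ^ 2)
    = fun x => Real.exp x * (1 - Real.exp x) * (1 - 10 * Real.exp x + Real.exp x ^ 2) / (1 + Real.exp x) ^ 5 := by
  rw [iteratedDeriv_succ, it2]
  funext x; exact (hd3 x).deriv

lemma key (x : ℝ) :
    Real.exp x * (1 - Real.exp x) * (1 - 10 * Real.exp x + Real.exp x ^ 2) / (1 + Real.exp x) ^ 5
        * (Real.exp x / (1 + Real.exp x) ^ 2) ^ 2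
      - 3 * (Real.exp x * (1 - 4 * Real.exp x + Real.exp x ^ 2) / (1 + Real.exp x) ^ 4)
        * (Real.exp x * (1 - Real.exp x) / (1 + Real.exp x) ^ 3)
        * (Real.exp x / (1 + Real.exp x) ^ 2)
      + 2 * (Real.exp x * (1 - Real.exp x) / (1 + Real.exp x) ^ 3) ^ 3
    = 2 * Real.exp (4 * x) * (Real.exp x - 1) / (1 + Real.exp x) ^ 9 := by
  have := den_ne x
  rw [show (4:ℝ) * x = x + x + x + x by ring, Real.exp_add, Real.exp_add, Real.exp_add]
  field_simp
  ring

/-- For the standard logistic density `f(x) = eˣ/(1 + eˣ)²`: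
`f‴(x) f(x)² − 3 f″(x) f′(x) f(x) + 2 f′(x)³ = 2 e^{4x}(eˣ − 1)/(1 + eˣ)⁹`,
whose sign equals `sign x`. -/
theorem stmt_18 :
    ∀ x : ℝ,
      iteratedDeriv 3 (fun y : ℝ => Real.exp y / (1 + Real.exp y) ^ 2) x
          * ((fun y : ℝ => Real.exp y / (1 + Real.exp y) ^ 2) x) ^ 2
        - 3 * iteratedDeriv 2 (fun y : ℝ => Real.exp y / (1 + Real.exp y) ^ 2) x
          * iteratedDeriv 1 (fun y : ℝ => Real.exp y / (1 + Real.exp y) ^ 2) x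
          * ((fun y : ℝ => Real.exp y / (1 + Real.exp y) ^ 2) x)
        + 2 * (iteratedDeriv 1 (fun y : ℝ => Real.exp y / (1 + Real.exp y) ^ 2) x) ^ 3
      = 2 * Real.exp (4 * x) * (Real.exp x - 1) / (1 + Real.exp x) ^ 9 ∧
      Real.sign (iteratedDeriv 3 (fun y : ℝ => Real.exp y / (1 + Real.exp y) ^ 2) x
          * ((fun y : ℝ => Real.exp y / (1 + Real.exp y) ^ 2) x) ^ 2
        - 3 * iteratedDeriv 2 (fun y : ℝ => Real.exp y / (1 + Real.exp y) ^ 2) x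
          * iteratedDeriv 1 (fun y : ℝ => Real.exp y / (1 + Real.exp y) ^ 2) x
          * ((fun y : ℝ => Real.exp y / (1 + Real.exp y) ^ 2) x)
        + 2 * (iteratedDeriv 1 (fun y : ℝ => Real.exp y / (1 + Real.exp y) ^ 2) x) ^ 3)
      = Real.sign x := by
  intro x
  have heq : iteratedDeriv 3 (fun y : ℝ => Real.exp y / (1 + Real.exp y) ^ 2) x
          * ((fun y : ℝ => Real.exp y / (1 + Real.exp y) ^ 2) x) ^ 2
        - 3 * iteratedDeriv 2 (fun y : ℝ => Real.exp y / (1 + Real.exp y) ^ 2) x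
          * iteratedDeriv 1 (fun y : ℝ => Real.exp y / (1 + Real.exp y) ^ 2) x
          * ((fun y : ℝ => Real.exp y / (1 + Real.exp y) ^ 2) x)
        + 2 * (iteratedDeriv 1 (fun y : ℝ => Real.exp y / (1 + Real.exp y) ^ 2) x) ^ 3
      = 2 * Real.exp (4 * x) * (Real.exp x - 1) / (1 + Real.exp x) ^ 9 := by
    rw [it1, it2, it3]
    exact key x
  refine ⟨heq, ?_⟩
  rw [heq]
  rcases lt_trichotomy x 0 with hx | hx | hx
  · have h1 : Real.exp x < 1 := Real.exp_lt_one_iff.mpr hx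
    have hneg : 2 * Real.exp (4 * x) * (Real.exp x - 1) / (1 + Real.exp x) ^ 9 < 0 := by
      apply div_neg_of_neg_of_pos _ (by positivity)
      have h2 : (0:ℝ) < 2 * Real.exp (4 * x) := by positivity
      nlinarith
    rw [Real.sign_of_neg hneg, Real.sign_of_neg hx]
  · subst hx; simp
  · have h1 : 1 < Real.exp x := by simpa using Real.exp_lt_exp.mpr hx
    have hpos : 0 < 2 * Real.exp (4 * x) * (Real.exp x - 1) / (1 + Real.exp x) ^ 9 := by
      apply div_pos _ (by positivity)
      have h2 : (0:ℝ) < 2 * Real.exp (4 * x) := by positivity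
      nlinarith
    rw [Real.sign_of_pos hpos, Real.sign_of_pos hx]
end
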